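/- Let G be a finite symmetry group for the substitution tiling system (𝒫, ω) which acts freely on 𝒫. Then the set of T' ∈ Ω_punc with trivial isotropy in R_punc ⋊ G — i.e. such that whenever x ∈ ℝ^d and g ∈ G satisfy T' + x ∈ Ω_punc and g⁻¹(T' + x) = T', then g = e and x = 0 — is dense in Ω_punc with respect to the tiling metric. (R_punc ⋊ G is essentially principal.) -/

import Mathlib

open Metric Set Pointwise

noncomputable section

/-- Points of `ℝ^d`. -/
abbrev Pt (d : ℕ) := EuclideanSpace ℝ (Fin d)

/-- A (possibly labelled) tile in `ℝ^d`: a subset of `ℝ^d` together with a label. -/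
structure Tile (d : ℕ) where
  carrier : Set (Pt d)
  label : ℕ

instance {d : ℕ} : Inhabited (Tile d) := ⟨⟨∅, 0⟩⟩

/-- Translate of a tile by a vector. -/
def Tile.translate {d : ℕ} (t : Tile d) (x : Pt d) : Tile d :=
  ⟨(fun y => y + x) '' t.carrier, t.label⟩

/-- A tile proper: homeomorphic to the closed unit ball. -/
def Tile.IsTile {d : ℕ} (t : Tile d) : Prop :=
  Nonempty (t.carrier ≃ₜ (Metric.closedBall (0 : Pt d) 1))

/-- Support of a partial tiling: the union of its tiles. -/
def psupp {d : ℕ} (P : Set (Tile d)) : Set (Pt d) := ⋃ t ∈ P, t.carrier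

/-- `tilesAt P U` = the tiles of `P` meeting `U`, written `P(U)` in the paper. -/
def tilesAt {d : ℕ} (P : Set (Tile d)) (U : Set (Pt d)) : Set (Tile d) :=
  {t ∈ P | (t.carrier ∩ U).Nonempty}

/-- Translate of a collection of tiles. -/
def translateSet {d : ℕ} (P : Set (Tile d)) (x : Pt d) : Set (Tile d) :=
  (fun t => t.translate x) '' P

/-- A partial tiling: tiles with pairwise disjoint interiors. -/
def IsPartialTiling {d : ℕ} (P : Set (Tile d)) : Prop :=
  (∀ t ∈ P, t.IsTile) ∧
  ∀ t ∈ P, ∀ t' ∈ P, t ≠ t' → interior t.carrier ∩ interior t'.carrier = ∅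

/-- A patch: a finite partial tiling. -/
def IsPatch {d : ℕ} (P : Set (Tile d)) : Prop := IsPartialTiling P ∧ P.Finite

/-- A tiling of all of `ℝ^d`. -/
def IsTilingOfSpace {d : ℕ} (P : Set (Tile d)) : Prop :=
  IsPartialTiling P ∧ psupp P = univ

/-- A substitution tiling system `(𝒫, ω)` with inflation constant `λ > 1`. -/
structure SubstSystem (d : ℕ) where
  proto : Set (Tile d)
  proto_finite : proto.Finite
  proto_nonempty : proto.Nonempty
  proto_isTile : ∀ p ∈ proto, p.IsTile
  proto_zero_mem : ∀ p ∈ proto, (0 : Pt d) ∈ interior p.carrier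
  proto_no_translate : ∀ p ∈ proto, ∀ q ∈ proto, ∀ x : Pt d,
    q = p.translate x → p = q ∧ x = 0
  lam : ℝ
  one_lt_lam : 1 < lam
  sub : Tile d → Set (Tile d)
  sub_patch : ∀ p ∈ proto, IsPatch (sub p)
  sub_proto : ∀ p ∈ proto, ∀ t ∈ sub p, ∃ q ∈ proto, ∃ x : Pt d, t = q.translate x
  sub_supp : ∀ p ∈ proto, psupp (sub p) = lam • p.carrier
  sub_translate : ∀ (t : Tile d) (x : Pt d),
    sub (t.translate x) = (fun s => s.translate (lam • x)) '' sub t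

namespace SubstSystem

variable {d : ℕ} (S : SubstSystem d)

/-- Tile-wise application of the substitution to a collection of tiles. -/
def subSet (P : Set (Tile d)) : Set (Tile d) := ⋃ t ∈ P, S.sub t

/-- Iterated substitution `ω^n` on collections of tiles. -/
def subIter (n : ℕ) (P : Set (Tile d)) : Set (Tile d) := (S.subSet)^[n] P

/-- `ω^n(t)` for a single tile `t`. -/
def omegan (n : ℕ) (t : Tile d) : Set (Tile d) := S.subIter n {t}

/-- The continuous hull `Ω`. -/
def Omega : Set (Set (Tile d)) :=
  {T | IsTilingOfSpace T ∧ ∀ P : Set (Tile d), P ⊆ T → IsPatch P →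
    ∃ n : ℕ, ∃ p ∈ S.proto, ∃ x : Pt d, P ⊆ translateSet (S.omegan n p) x}

/-- `x` is the puncture of the tile `t`, i.e. `t = p + x` for a prototile `p`. -/
def IsPuncture (t : Tile d) (x : Pt d) : Prop :=
  ∃ p ∈ S.proto, t = p.translate x

open Classical in
/-- The puncture `x(t)` of a tile `t` (chosen; unique for translates of prototiles). -/
def punc (t : Tile d) : Pt d :=
  if h : ∃ x : Pt d, S.IsPuncture t x then h.choose else 0

/-- The punctured hull (transversal) `Ω_punc`. -/
def OmegaPunc : Set (Set (Tile d)) :=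
  {T ∈ S.Omega | ∃ t ∈ T, S.IsPuncture t 0}

end SubstSystem

/-- The tiling metric. -/
def tilingDist {d : ℕ} (T T' : Set (Tile d)) : ℝ :=
  sInf ({1} ∪ {ε : ℝ | 0 < ε ∧ ∃ x x' : Pt d, ‖x‖ < ε ∧ ‖x'‖ < ε ∧
    tilesAt (translateSet T (-x)) (ball (0 : Pt d) (1 / ε)) =
      tilesAt (translateSet T' (-x')) (ball (0 : Pt d) (1 / ε))})

namespace SubstSystem

variable {d : ℕ} (S : SubstSystem d)

/-- Density of a family of tilings in `Ω_punc` w.r.t. the tiling metric. -/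
def DenseInPunc (E : Set (Set (Tile d))) : Prop :=
  ∀ T ∈ S.OmegaPunc, ∀ ε : ℝ, 0 < ε → ∃ T' ∈ E, tilingDist T T' < ε

/-- Openness of a subset of `Ω_punc` w.r.t. the tiling metric (subspace topology). -/
def OpenInPunc (E : Set (Set (Tile d))) : Prop :=
  E ⊆ S.OmegaPunc ∧ ∀ T ∈ E, ∃ ε : ℝ, 0 < ε ∧
    ∀ T' ∈ S.OmegaPunc, tilingDist T T' < ε → T' ∈ E

/-- The translational equivalence relation `R_punc` on `Ω_punc`. -/
def Rpunc : Set (Set (Tile d) × Set (Tile d)) :=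
  {TT | TT.1 ∈ S.OmegaPunc ∧ TT.2 ∈ S.OmegaPunc ∧ ∃ x : Pt d, TT.2 = translateSet TT.1 x}

/-- `Punc(n, p)`: the punctures of the tiles of `ω^n(p)`. -/
def Punc (n : ℕ) (p : Tile d) : Set (Pt d) :=
  {x | ∃ t ∈ S.omegan n p, S.IsPuncture t x}

/-- `E^n_p(x, y)`. -/
def Eset (n : ℕ) (p : Tile d) (x y : Pt d) : Set (Set (Tile d) × Set (Tile d)) :=
  {TT | ∃ T ∈ S.OmegaPunc, p ∈ T ∧
    TT.1 = translateSet (S.subIter n T) (-x) ∧ TT.2 = translateSet (S.subIter n T) (-y)}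

/-- `R_n`. -/
def Rn (n : ℕ) : Set (Set (Tile d) × Set (Tile d)) :=
  ⋃ p ∈ S.proto, ⋃ x ∈ S.Punc n p, ⋃ y ∈ S.Punc n p, S.Eset n p x y

/-- `R_AF = ∪ₙ R_n`. -/
def RAF : Set (Set (Tile d) × Set (Tile d)) := ⋃ n : ℕ, S.Rn n

/-- `U(P, t)`. -/
def Uset (P : Set (Tile d)) (t : Tile d) : Set (Set (Tile d)) :=
  {T ∈ S.OmegaPunc | translateSet P (-(S.punc t)) ⊆ T}

/-- `V(P, t₁, t₂)`. -/
def Vset (P : Set (Tile d)) (t₁ t₂ : Tile d) : Set (Set (Tile d) × Set (Tile d)) :=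
  {TT | TT.1 ∈ S.Uset P t₁ ∧ TT.2 = translateSet TT.1 (S.punc t₁ - S.punc t₂)}

/-- (A1) primitivity. -/
def Primitive : Prop :=
  ∃ N : ℕ, ∀ p ∈ S.proto, ∀ q ∈ S.proto, ∃ x : Pt d, Tile.translate q x ∈ S.omegan N p

/-- (A2) finite local complexity. -/
def FLC : Prop :=
  ∀ R : ℝ, 0 < R → ∃ Ps : Set (Set (Tile d)), Ps.Finite ∧
    ∀ P : Set (Tile d), IsPatch P → Metric.diam (psupp P) < R →
      (∃ T ∈ S.Omega, P ⊆ T) → ∃ P₀ ∈ Ps, ∃ x : Pt d, P = translateSet P₀ x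

/-- (A3) `ω : Ω → Ω` is bijective. -/
def SubBijective : Prop := Set.BijOn S.subSet S.Omega S.Omega

/-- (A4) `ω` forces its border. -/
def ForcesBorder : Prop :=
  ∃ n : ℕ, ∀ p ∈ S.proto, ∀ T ∈ S.Omega, ∀ T' ∈ S.Omega, ∀ x x' : Pt d,
    translateSet (S.omegan n p) x ⊆ T → translateSet (S.omegan n p) x' ⊆ T' →
    translateSet (tilesAt T ((fun y => y + x) '' psupp (S.omegan n p))) (-x) =
      translateSet (tilesAt T' ((fun y => y + x') '' psupp (S.omegan n p))) (-x')

/-- Prototile boundaries have box-counting dimension strictly less than `d`. -/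
def SmallBoundary : Prop :=
  ∃ c : ℝ, c < d ∧ ∃ K₀ : ℝ, ∀ p ∈ S.proto, ∀ ε : ℝ, 0 < ε →
    ∃ centers : Finset (Pt d), (centers.card : ℝ) ≤ K₀ * ε ^ (-c) ∧
      frontier p.carrier ⊆ ⋃ z ∈ centers, ball z ε

end SubstSystem

/-- A symmetry group action for `(𝒫, ω)`: `G ≤ O(d, ℝ)` acting on tiles, preserving
the prototile set and commuting with the substitution. -/
structure SymmAction {d : ℕ} (S : SubstSystem d) (G : Subgroup (Pt d ≃ₗᵢ[ℝ] Pt d)) where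
  act : G → Tile d → Tile d
  act_carrier : ∀ (g : G) (t : Tile d),
    (act g t).carrier = (g : Pt d ≃ₗᵢ[ℝ] Pt d) '' t.carrier
  act_one : ∀ t : Tile d, act 1 t = t
  act_mul : ∀ (g h : G) (t : Tile d), act (g * h) t = act g (act h t)
  act_proto : ∀ (g : G), ∀ p ∈ S.proto, act g p ∈ S.proto
  act_translate : ∀ (g : G) (t : Tile d) (x : Pt d),
    act g (t.translate x) = (act g t).translate ((g : Pt d ≃ₗᵢ[ℝ] Pt d) x)
  act_sub : ∀ (g : G), ∀ p ∈ S.proto, S.sub (act g p) = act g '' S.sub p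

/-- Action of a group element on a (partial) tiling: `gT = {gt : t ∈ T}`. -/
def SymmAction.actSet {d : ℕ} {S : SubstSystem d} {G : Subgroup (Pt d ≃ₗᵢ[ℝ] Pt d)}
    (σ : SymmAction S G) (g : G) (T : Set (Tile d)) : Set (Tile d) := σ.act g '' T

/-- `G` acts freely on the prototile set. -/
def SymmAction.FreeOnProto {d : ℕ} {S : SubstSystem d} {G : Subgroup (Pt d ≃ₗᵢ[ℝ] Pt d)}
    (σ : SymmAction S G) : Prop := ∀ g : G, ∀ p ∈ S.proto, σ.act g p = p → g = 1

/-- Composition of relations. -/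
def relComp {α : Type*} (R₁ R₂ : Set (α × α)) : Set (α × α) :=
  {q | ∃ z : α, (q.1, z) ∈ R₁ ∧ (z, q.2) ∈ R₂}

/-- Transpose (inverse) of a relation. -/
def relTrans {α : Type*} (R : Set (α × α)) : Set (α × α) := {q | (q.2, q.1) ∈ R}

end
noncomputable section
namespace TilingAux

open Metric Set Pointwise

variable {d : ℕ}

@[simp] lemma Tile.translate_carrier (t : Tile d) (x : Pt d) :
    (t.translate x).carrier = (fun y => y + x) '' t.carrier := rfl

@[simp] lemma tr_zero (t : Tile d) : t.translate 0 = t := by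
  cases t with
  | mk c l => simp [Tile.translate]

lemma tr_tr (t : Tile d) (x y : Pt d) :
    (t.translate x).translate y = t.translate (x + y) := by
  cases t with
  | mk c l =>
    simp only [Tile.translate, Tile.mk.injEq, and_true]
    rw [Set.image_image]
    ext z; simp [add_assoc]

lemma tr_cancel {t s : Tile d} (x : Pt d) (h : t.translate x = s.translate x) : t = s := by
  have := congrArg (fun u => u.translate (-x)) h
  simpa [tr_tr] using this

@[simp] lemma trS_zero (P : Set (Tile d)) : translateSet P 0 = P := by
  simp [translateSet]

lemma trS_trS (P : Set (Tile d)) (x y : Pt d) :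
    translateSet (translateSet P x) y = translateSet P (x + y) := by
  simp only [translateSet, Set.image_image]
  exact Set.image_congr fun t _ => tr_tr t x y

lemma mem_trS {P : Set (Tile d)} {x : Pt d} {t : Tile d} (ht : t ∈ P) :
    t.translate x ∈ translateSet P x := ⟨t, ht, rfl⟩

lemma trS_mono {P Q : Set (Tile d)} (h : P ⊆ Q) (x : Pt d) :
    translateSet P x ⊆ translateSet Q x := Set.image_mono h

lemma trS_iUnion {ι : Sort*} (f : ι → Set (Tile d)) (x : Pt d) :
    translateSet (⋃ i, f i) x = ⋃ i, translateSet (f i) x := Set.image_iUnion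

@[simp] lemma trS_singleton (t : Tile d) (x : Pt d) :
    translateSet {t} x = {t.translate x} := Set.image_singleton

lemma psupp_trS (P : Set (Tile d)) (x : Pt d) :
    psupp (translateSet P x) = (fun y => y + x) '' psupp P := by
  simp only [psupp, translateSet]
  ext v
  simp only [Set.mem_iUnion, Set.mem_image]
  constructor
  · rintro ⟨t, ⟨s, hs, rfl⟩, hv⟩
    rcases hv with ⟨w, hw, rfl⟩
    exact ⟨w, ⟨s, hs, hw⟩, rfl⟩
  · rintro ⟨w, ⟨s, hs, hw⟩, rfl⟩
    exact ⟨s.translate x, ⟨s, hs, rfl⟩, ⟨w, hw, rfl⟩⟩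

lemma interior_translate (A : Set (Pt d)) (x : Pt d) :
    interior ((fun y => y + x) '' A) = (fun y => y + x) '' interior A := by
  have := (Homeomorph.addRight x).image_interior A
  simpa using this.symm

lemma interior_tr (t : Tile d) (x : Pt d) :
    interior (t.translate x).carrier = (fun y => y + x) '' interior t.carrier :=
  interior_translate _ _

lemma isTile_tr {t : Tile d} (h : t.IsTile) (x : Pt d) : (t.translate x).IsTile := by
  rcases h with ⟨e⟩
  exact ⟨(((Homeomorph.addRight x).image t.carrier).symm.trans e)⟩

end TilingAux
end
noncomputable section
namespace TilingAux2
open Metric Set Pointwise TilingAux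

variable {d : ℕ} (S : SubstSystem d)

/-- `t` is a translate of a prototile. -/
def PT (t : Tile d) : Prop := ∃ p ∈ S.proto, ∃ z : Pt d, t = p.translate z

variable {S}

lemma PT_proto {p : Tile d} (hp : p ∈ S.proto) : PT S p :=
  ⟨p, hp, 0, (tr_zero p).symm⟩

lemma PT_tr {t : Tile d} (h : PT S t) (x : Pt d) : PT S (t.translate x) := by
  rcases h with ⟨p, hp, z, rfl⟩
  exact ⟨p, hp, z + x, tr_tr p z x⟩

lemma PT_isTile {t : Tile d} (h : PT S t) : t.IsTile := by
  rcases h with ⟨p, hp, z, rfl⟩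
  exact isTile_tr (S.proto_isTile p hp) z

lemma sub_tr_general {t : Tile d} (hPT : PT S t) :
    ∀ x : Pt d, S.sub (t.translate x) = translateSet (S.sub t) (S.lam • x) :=
  fun x => S.sub_translate t x

lemma psupp_sub {t : Tile d} (h : PT S t) :
    psupp (S.sub t) = S.lam • t.carrier := by
  rcases h with ⟨p, hp, z, rfl⟩
  rw [S.sub_translate p z]
  show psupp (translateSet (S.sub p) (S.lam • z)) = _
  rw [psupp_trS, S.sub_supp p hp]
  ext v
  simp only [Set.mem_image, Set.mem_smul_set, Tile.translate_carrier]
  constructor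
  · rintro ⟨w, ⟨u, hu, rfl⟩, rfl⟩
    exact ⟨u + z, ⟨u, hu, rfl⟩, by simp [smul_add]⟩
  · rintro ⟨w, ⟨u, hu, rfl⟩, rfl⟩
    exact ⟨S.lam • u, ⟨u, hu, rfl⟩, by simp [smul_add]⟩

lemma sub_tiles_PT {t : Tile d} (h : PT S t) {s : Tile d} (hs : s ∈ S.sub t) :
    PT S s := by
  rcases h with ⟨p, hp, z, rfl⟩
  rw [S.sub_translate p z] at hs
  rcases hs with ⟨u, hu, rfl⟩
  rcases S.sub_proto p hp u hu with ⟨q, hq, w, rfl⟩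
  show PT S ((q.translate w).translate (S.lam • z))
  exact PT_tr (PT_tr (PT_proto hq) w) _

lemma isPatch_trS {P : Set (Tile d)} (h : IsPatch P) (x : Pt d) :
    IsPatch (translateSet P x) := by
  obtain ⟨⟨h1, h2⟩, h3⟩ := h
  refine ⟨⟨?_, ?_⟩, h3.image _⟩
  · rintro t ⟨s, hs, rfl⟩
    exact isTile_tr (h1 s hs) x
  · rintro t ⟨s, hs, rfl⟩ t' ⟨s', hs', rfl⟩ hne
    have hss' : s ≠ s' := by rintro rfl; exact hne rfl
    rw [interior_tr, interior_tr]
    rw [← Set.image_inter (f := fun y => y + x) (add_left_injective x),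
      h2 s hs s' hs' hss', Set.image_empty]

lemma sub_isPatch {t : Tile d} (h : PT S t) : IsPatch (S.sub t) := by
  rcases h with ⟨p, hp, z, rfl⟩
  rw [S.sub_translate p z]
  exact isPatch_trS (S.sub_patch p hp) _

end TilingAux2
end
noncomputable section
namespace TilingAux3
open Metric Set Pointwise TilingAux TilingAux2

variable {d : ℕ} {S : SubstSystem d}

lemma subSet_def (P : Set (Tile d)) : S.subSet P = ⋃ t ∈ P, S.sub t := rfl

lemma subSet_mono {P Q : Set (Tile d)} (h : P ⊆ Q) : S.subSet P ⊆ S.subSet Q :=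
  Set.biUnion_subset_biUnion_left h

lemma subSet_iUnion {ι : Sort*} (f : ι → Set (Tile d)) :
    S.subSet (⋃ i, f i) = ⋃ i, S.subSet (f i) := by
  simp only [SubstSystem.subSet]
  ext s
  simp only [Set.mem_iUnion]
  tauto

@[simp] lemma subSet_singleton (t : Tile d) : S.subSet {t} = S.sub t := by
  simp [SubstSystem.subSet]

lemma subSet_trS (P : Set (Tile d)) (x : Pt d) :
    S.subSet (translateSet P x) = translateSet (S.subSet P) (S.lam • x) := by
  simp only [SubstSystem.subSet, translateSet, Set.biUnion_image]
  rw [Set.image_iUnion₂]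
  exact Set.iUnion₂_congr fun t ht => S.sub_translate t x

lemma subSet_PT {P : Set (Tile d)} (h : ∀ t ∈ P, PT S t) :
    ∀ s ∈ S.subSet P, PT S s := by
  rintro s hs
  rcases Set.mem_iUnion₂.1 hs with ⟨t, ht, hst⟩
  exact sub_tiles_PT (h t ht) hst

lemma psupp_subSet {P : Set (Tile d)} (h : ∀ t ∈ P, PT S t) :
    psupp (S.subSet P) = S.lam • psupp P := by
  have h1 : psupp (S.subSet P) = ⋃ t ∈ P, psupp (S.sub t) := by
    simp only [psupp, SubstSystem.subSet]
    ext v; simp only [Set.mem_iUnion]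
    tauto
  rw [h1]
  have h2 : (⋃ t ∈ P, psupp (S.sub t)) = ⋃ t ∈ P, S.lam • t.carrier :=
    Set.iUnion₂_congr fun t ht => psupp_sub (h t ht)
  rw [h2]
  simp only [psupp]
  rw [Set.smul_set_iUnion₂]

lemma lam_pos : (0:ℝ) < S.lam := lt_trans one_pos S.one_lt_lam
lemma lam_ne : (S.lam : ℝ) ≠ 0 := ne_of_gt lam_pos
lemma lam_pow_pos (n : ℕ) : (0:ℝ) < S.lam ^ n := pow_pos lam_pos n
lemma lam_pow_ne (n : ℕ) : (S.lam : ℝ) ^ n ≠ 0 := ne_of_gt (lam_pow_pos n)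

lemma isPartial_subSet {P : Set (Tile d)} (hP : IsPartialTiling P) (hPT : ∀ t ∈ P, PT S t) :
    IsPartialTiling (S.subSet P) := by
  constructor
  · exact fun s hs => PT_isTile (subSet_PT hPT s hs)
  · rintro s hs s' hs' hne
    rcases Set.mem_iUnion₂.1 hs with ⟨t, ht, hst⟩
    rcases Set.mem_iUnion₂.1 hs' with ⟨t', ht', hst'⟩
    by_cases htt : t = t'
    · subst htt
      exact (sub_isPatch (hPT t ht)).1.2 s hst s' hst' hne
    · -- tiles from different supertiles
      have k1 : interior s.carrier ⊆ S.lam • interior t.carrier := by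
        have : s.carrier ⊆ psupp (S.sub t) := by
          intro v hv; exact Set.mem_biUnion hst hv
        rw [psupp_sub (hPT t ht)] at this
        calc interior s.carrier ⊆ interior (S.lam • t.carrier) := interior_mono this
          _ = S.lam • interior t.carrier := interior_smul₀ lam_ne _
      have k2 : interior s'.carrier ⊆ S.lam • interior t'.carrier := by
        have : s'.carrier ⊆ psupp (S.sub t') := by
          intro v hv; exact Set.mem_biUnion hst' hv
        rw [psupp_sub (hPT t' ht')] at this
        calc interior s'.carrier ⊆ interior (S.lam • t'.carrier) := interior_mono this
          _ = S.lam • interior t'.carrier := interior_smul₀ lam_ne _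
      have := hP.2 t ht t' ht' htt
      apply Set.eq_empty_of_subset_empty
      calc interior s.carrier ∩ interior s'.carrier
          ⊆ (S.lam • interior t.carrier) ∩ (S.lam • interior t'.carrier) :=
            Set.inter_subset_inter k1 k2
        _ = S.lam • (interior t.carrier ∩ interior t'.carrier) :=
            (Set.smul_set_inter₀ lam_ne).symm
        _ = ∅ := by rw [this]; exact Set.smul_set_empty

lemma isPatch_subSet {P : Set (Tile d)} (hP : IsPatch P) (hPT : ∀ t ∈ P, PT S t) :
    IsPatch (S.subSet P) := by
  refine ⟨isPartial_subSet hP.1 hPT, ?_⟩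
  exact hP.2.biUnion fun t ht => (sub_isPatch (hPT t ht)).2

-- subIter lemmas
lemma subIter_zero (P : Set (Tile d)) : S.subIter 0 P = P := rfl

lemma subIter_succ (n : ℕ) (P : Set (Tile d)) :
    S.subIter (n+1) P = S.subIter n (S.subSet P) := Function.iterate_succ_apply _ _ _

lemma subIter_succ' (n : ℕ) (P : Set (Tile d)) :
    S.subIter (n+1) P = S.subSet (S.subIter n P) := Function.iterate_succ_apply' _ _ _

lemma subIter_add (m k : ℕ) (P : Set (Tile d)) :
    S.subIter (m + k) P = S.subIter k (S.subIter m P) := by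
  simp [SubstSystem.subIter, add_comm m k, Function.iterate_add_apply]

lemma subIter_mono {P Q : Set (Tile d)} (h : P ⊆ Q) (n : ℕ) :
    S.subIter n P ⊆ S.subIter n Q := by
  induction n with
  | zero => exact h
  | succ n ih => rw [subIter_succ', subIter_succ']; exact subSet_mono ih

lemma subIter_PT {P : Set (Tile d)} (h : ∀ t ∈ P, PT S t) (n : ℕ) :
    ∀ s ∈ S.subIter n P, PT S s := by
  induction n with
  | zero => exact h
  | succ n ih => rw [subIter_succ']; exact subSet_PT ih

lemma subIter_trS (n : ℕ) (P : Set (Tile d)) (x : Pt d) :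
    S.subIter n (translateSet P x) = translateSet (S.subIter n P) (S.lam ^ n • x) := by
  induction n with
  | zero => simp [subIter_zero]
  | succ n ih =>
    rw [subIter_succ', subIter_succ', ih, subSet_trS, smul_smul, ← pow_succ']

lemma psupp_subIter {P : Set (Tile d)} (h : ∀ t ∈ P, PT S t) (n : ℕ) :
    psupp (S.subIter n P) = S.lam ^ n • psupp P := by
  induction n with
  | zero => rw [subIter_zero, pow_zero, one_smul]
  | succ n ih =>
    rw [subIter_succ', psupp_subSet (subIter_PT h n), ih, smul_smul, ← pow_succ']

lemma isPartial_subIter {P : Set (Tile d)} (hP : IsPartialTiling P)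
    (hPT : ∀ t ∈ P, PT S t) (n : ℕ) : IsPartialTiling (S.subIter n P) := by
  induction n with
  | zero => exact hP
  | succ n ih => rw [subIter_succ']; exact isPartial_subSet ih (subIter_PT hPT n)

lemma isPatch_subIter {P : Set (Tile d)} (hP : IsPatch P)
    (hPT : ∀ t ∈ P, PT S t) (n : ℕ) : IsPatch (S.subIter n P) := by
  induction n with
  | zero => exact hP
  | succ n ih => rw [subIter_succ']; exact isPatch_subSet ih (subIter_PT hPT n)

lemma subIter_iUnion {ι : Sort*} (f : ι → Set (Tile d)) (n : ℕ) :
    S.subIter n (⋃ i, f i) = ⋃ i, S.subIter n (f i) := by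
  induction n with
  | zero => rfl
  | succ n ih => rw [subIter_succ', ih, subSet_iUnion]; simp [subIter_succ']

-- omegan
lemma omegan_def (n : ℕ) (t : Tile d) : S.omegan n t = S.subIter n {t} := rfl

lemma omegan_PT {p : Tile d} (hp : PT S p) (n : ℕ) :
    ∀ s ∈ S.omegan n p, PT S s :=
  subIter_PT (by simpa using hp) n

lemma omegan_tr (n : ℕ) (t : Tile d) (x : Pt d) :
    S.omegan n (t.translate x) = translateSet (S.omegan n t) (S.lam ^ n • x) := by
  rw [omegan_def, omegan_def, ← subIter_trS]
  congr 1
  simp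

lemma psupp_omegan {p : Tile d} (hp : PT S p) (n : ℕ) :
    psupp (S.omegan n p) = S.lam ^ n • p.carrier := by
  rw [omegan_def, psupp_subIter (by simpa using hp)]
  congr 1
  simp [psupp]

lemma isPatch_omegan {p : Tile d} (hp : PT S p) (n : ℕ) :
    IsPatch (S.omegan n p) := by
  apply isPatch_subIter _ (by simpa using hp)
  refine ⟨⟨?_, ?_⟩, Set.finite_singleton _⟩
  · rintro t rfl
    · exact PT_isTile hp
  · rintro t rfl t' rfl hne
    · exact absurd rfl hne

lemma omegan_mem_PT {p : Tile d} (hp : PT S p) {n : ℕ} {s : Tile d}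
    (hs : s ∈ S.omegan n p) : PT S s := omegan_PT hp n s hs

end TilingAux3
end
noncomputable section
namespace TilingAux4
open Metric Set Pointwise TilingAux TilingAux2 TilingAux3

variable {d : ℕ} {S : SubstSystem d}

lemma isCompact_carrier {t : Tile d} (h : t.IsTile) : IsCompact t.carrier := by
  rcases h with ⟨e⟩
  have : CompactSpace (Metric.closedBall (0 : Pt d) 1) :=
    isCompact_iff_compactSpace.1 (isCompact_closedBall _ _)
  have : CompactSpace t.carrier := e.symm.compactSpace
  exact isCompact_iff_compactSpace.2 this

lemma punc_unique {p q : Tile d} (hp : p ∈ S.proto) (hq : q ∈ S.proto) {x x' : Pt d}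
    (h : p.translate x = q.translate x') : p = q ∧ x = x' := by
  have h2 : q = p.translate (x - x') := by
    have h5 := congrArg (fun u => u.translate (-x')) h
    simp only [tr_tr] at h5
    rw [show x' + -x' = (0 : Pt d) by abel, tr_zero] at h5
    rw [← h5, show x + -x' = x - x' from (sub_eq_add_neg x x').symm]
  obtain ⟨h3, h4⟩ := S.proto_no_translate p hp q hq _ h2
  exact ⟨h3, sub_eq_zero.1 h4⟩

end TilingAux4
end
noncomputable section
namespace TilingAux4
open Metric Set Pointwise TilingAux TilingAux2 TilingAux3

variable {d : ℕ} {S : SubstSystem d}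

lemma exists_D : ∃ D : ℝ, 0 < D ∧ ∀ p ∈ S.proto, p.carrier ⊆ closedBall (0 : Pt d) D := by
  have h : ∀ p ∈ S.proto, ∃ Dp : ℝ, 0 < Dp ∧ p.carrier ⊆ closedBall (0 : Pt d) Dp := by
    intro p hp
    have hc : IsCompact p.carrier := isCompact_carrier (S.proto_isTile p hp)
    rcases hc.isBounded.subset_closedBall 0 with ⟨Dp, hDp⟩
    exact ⟨max Dp 1, lt_of_lt_of_le one_pos (le_max_right _ _),
      hDp.trans (closedBall_subset_closedBall (le_max_left _ _))⟩
  classical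
  choose! f hf1 hf2 using h
  obtain ⟨p₀, hp₀⟩ := S.proto_nonempty
  have hne : S.proto_finite.toFinset.Nonempty := ⟨p₀, S.proto_finite.mem_toFinset.2 hp₀⟩
  refine ⟨S.proto_finite.toFinset.sup' hne f, ?_, ?_⟩
  · exact lt_of_lt_of_le (hf1 p₀ hp₀) (Finset.le_sup' f (S.proto_finite.mem_toFinset.2 hp₀))
  · intro p hp
    exact (hf2 p hp).trans (closedBall_subset_closedBall
      (Finset.le_sup' f (S.proto_finite.mem_toFinset.2 hp)))

lemma exists_r : ∃ r : ℝ, 0 < r ∧ ∀ p ∈ S.proto, ball (0 : Pt d) r ⊆ interior p.carrier := by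
  have h : ∀ p ∈ S.proto, ∃ rp : ℝ, 0 < rp ∧ ball (0 : Pt d) rp ⊆ interior p.carrier := by
    intro p hp
    rcases Metric.isOpen_iff.1 isOpen_interior 0 (S.proto_zero_mem p hp) with ⟨rp, h1, h2⟩
    exact ⟨rp, h1, h2⟩
  classical
  choose! f hf1 hf2 using h
  obtain ⟨p₀, hp₀⟩ := S.proto_nonempty
  have hne : S.proto_finite.toFinset.Nonempty := ⟨p₀, S.proto_finite.mem_toFinset.2 hp₀⟩
  refine ⟨S.proto_finite.toFinset.inf' hne f, ?_, ?_⟩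
  · rw [Finset.lt_inf'_iff]
    intro p hp
    exact hf1 p (S.proto_finite.mem_toFinset.1 hp)
  · intro p hp
    exact subset_trans (ball_subset_ball (Finset.inf'_le f (S.proto_finite.mem_toFinset.2 hp)))
      (hf2 p hp)

/-- The open ball of radius `r` about the puncture is in the interior of the tile. -/
lemma ball_subset_interior {r : ℝ} (hr : ∀ p ∈ S.proto, ball (0 : Pt d) r ⊆ interior p.carrier)
    {p : Tile d} (hp : p ∈ S.proto) (z : Pt d) :
    ball z r ⊆ interior (p.translate z).carrier := by
  rw [interior_tr]
  intro v hv
  refine ⟨v - z, hr p hp ?_, by simp⟩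
  rw [mem_ball, dist_eq_norm, sub_zero]
  rw [mem_ball, dist_eq_norm] at hv
  simpa using hv

/-- Two tiles of a partial tiling whose punctures are within `2r` coincide. -/
lemma separation {r : ℝ} (hr0 : 0 < r)
    (hr : ∀ p ∈ S.proto, ball (0 : Pt d) r ⊆ interior p.carrier)
    {W : Set (Tile d)} (hW : IsPartialTiling W)
    {p q : Tile d} (hp : p ∈ S.proto) (hq : q ∈ S.proto) {z z' : Pt d}
    (hzW : p.translate z ∈ W) (hz'W : q.translate z' ∈ W)
    (hd : ‖z - z'‖ < 2 * r) : p.translate z = q.translate z' := by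
  by_contra hne
  have hdis := hW.2 _ hzW _ hz'W hne
  have key : ‖(2⁻¹ : ℝ) • (z - z')‖ < r := by
    rw [norm_smul]
    have h2 : ‖(2⁻¹ : ℝ)‖ = 2⁻¹ := by
      rw [Real.norm_eq_abs, abs_of_pos]; norm_num
    rw [h2]
    nlinarith [norm_nonneg (z - z')]
  have hm : z + (2⁻¹ : ℝ) • (z' - z) ∈ interior (p.translate z).carrier ∩
      interior (q.translate z').carrier := by
    constructor
    · apply ball_subset_interior hr hp
      rw [mem_ball, dist_eq_norm]
      have he : z + (2⁻¹ : ℝ) • (z' - z) - z = (2⁻¹ : ℝ) • (z' - z) := by abel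
      rw [he]
      have he2 : (2⁻¹ : ℝ) • (z' - z) = -((2⁻¹ : ℝ) • (z - z')) := by
        rw [← smul_neg]; congr 1; abel
      rw [he2, norm_neg]
      exact key
    · apply ball_subset_interior hr hq
      rw [mem_ball, dist_eq_norm]
      have he : z + (2⁻¹ : ℝ) • (z' - z) - z' = (2⁻¹ : ℝ) • (z - z') := by
        rw [smul_sub, smul_sub]
        rw [show ((2⁻¹ : ℝ) • z' - (2⁻¹ : ℝ) • z : Pt d) = -((2⁻¹:ℝ) • z - (2⁻¹:ℝ) • z') by abel]
        rw [show (z + -((2⁻¹:ℝ) • z - (2⁻¹:ℝ) • z') - z' : Pt d)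
            = (z - (2⁻¹:ℝ) • z) - (z' - (2⁻¹:ℝ) • z') by abel]
        have hz : (z : Pt d) - (2⁻¹:ℝ) • z = (2⁻¹:ℝ) • z := by
          rw [sub_eq_iff_eq_add, ← add_smul]; norm_num
        have hz' : (z' : Pt d) - (2⁻¹:ℝ) • z' = (2⁻¹:ℝ) • z' := by
          rw [sub_eq_iff_eq_add, ← add_smul]; norm_num
        rw [hz, hz']
      rw [he]
      exact key
  rw [hdis] at hm
  exact hm

end TilingAux4
end
noncomputable section
namespace TilingAux5
open Metric Set Pointwise TilingAux TilingAux2 TilingAux3 TilingAux4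

variable {d : ℕ} {S : SubstSystem d}

lemma Omega_tiles_PT {T : Set (Tile d)} (hT : T ∈ S.Omega) : ∀ t ∈ T, PT S t := by
  intro t ht
  have hpatch : IsPatch {t} := by
    refine ⟨⟨?_, ?_⟩, Set.finite_singleton t⟩
    · rintro s rfl
      · exact hT.1.1.1 s ht
    · rintro s rfl s' rfl hne
      · exact absurd rfl hne
  obtain ⟨n, p, hp, x, hsub⟩ := hT.2 {t} (by simpa using ht) hpatch
  have : t ∈ translateSet (S.omegan n p) x := hsub rfl
  rcases this with ⟨s, hs, rfl⟩
  exact PT_tr (omegan_mem_PT (PT_proto hp) hs) x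

lemma Omega_cover {T : Set (Tile d)} (hT : T ∈ S.Omega) (v : Pt d) :
    ∃ t ∈ T, v ∈ t.carrier := by
  have : v ∈ psupp T := by rw [hT.1.2]; trivial
  simpa [psupp] using this

lemma isPartial_subset {W P : Set (Tile d)} (hW : IsPartialTiling W) (h : P ⊆ W) :
    IsPartialTiling P :=
  ⟨fun t ht => hW.1 t (h ht), fun t ht t' ht' => hW.2 t (h ht) t' (h ht')⟩

lemma punc_tr {p : Tile d} (hp : p ∈ S.proto) (z : Pt d) :
    S.punc (p.translate z) = z := by
  have hex : ∃ x : Pt d, S.IsPuncture (p.translate z) x := ⟨z, p, hp, rfl⟩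
  rw [SubstSystem.punc, dif_pos hex]
  obtain ⟨q, hq, hqe⟩ := hex.choose_spec
  exact ((punc_unique hq hp hqe.symm).2)

/-- Finite "Baire" lemma: a nonempty open set covered by finitely many closed tile
carriers meets the interior of one of them. -/
lemma baire_finite (F : Finset (Tile d)) (hcl : ∀ t ∈ F, IsClosed t.carrier) :
    ∀ U : Set (Pt d), IsOpen U → U.Nonempty → (U ⊆ ⋃ t ∈ F, t.carrier) →
      ∃ t ∈ F, (interior t.carrier ∩ U).Nonempty := by
  classical
  induction F using Finset.induction with
  | empty =>
    intro U _ hne hsub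
    rcases hne with ⟨v, hv⟩
    simpa using hsub hv
  | @insert a F ha ih =>
    intro U hU hne hsub
    by_cases hcase : U ⊆ a.carrier
    · have : U ⊆ interior a.carrier := interior_maximal hcase hU
      rcases hne with ⟨v, hv⟩
      exact ⟨a, Finset.mem_insert_self a F, v, this hv, hv⟩
    · rw [Set.not_subset] at hcase
      rcases hcase with ⟨u, hu, hua⟩
      have hU' : IsOpen (U \ a.carrier) := hU.sdiff (hcl a (Finset.mem_insert_self a F))
      have hne' : (U \ a.carrier).Nonempty := ⟨u, hu, hua⟩
      have hsub' : U \ a.carrier ⊆ ⋃ t ∈ F, t.carrier := by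
        rintro v ⟨hv, hva⟩
        have := hsub hv
        simp only [Finset.mem_insert, Set.mem_iUnion, exists_prop] at this ⊢
        rcases this with ⟨t, (rfl | htF), hvt⟩
        · exact absurd hvt hva
        · exact ⟨t, htF, hvt⟩
      obtain ⟨t, htF, w, hw1, hw2, _⟩ := ih (fun t ht => hcl t (Finset.mem_insert_of_mem ht))
        (U \ a.carrier) hU' hne' hsub'
      exact ⟨t, Finset.mem_insert_of_mem htF, w, hw1, hw2⟩

lemma tilesAt_finite {r D R : ℝ} (hr0 : 0 < r)
    (hr : ∀ p ∈ S.proto, ball (0 : Pt d) r ⊆ interior p.carrier)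
    (hD : ∀ p ∈ S.proto, p.carrier ⊆ closedBall (0 : Pt d) D)
    {W : Set (Tile d)} (hW : IsPartialTiling W) (hPT : ∀ t ∈ W, PT S t) :
    (tilesAt W (closedBall (0 : Pt d) R)).Finite := by
  classical
  -- punctures of such tiles lie in the ball of radius R + D
  have hpunc : ∀ t ∈ tilesAt W (closedBall (0 : Pt d) R),
      S.punc t ∈ closedBall (0 : Pt d) (R + D) := by
    rintro t ⟨htW, v, hvt, hvR⟩
    rcases hPT t htW with ⟨p, hp, z, rfl⟩
    rw [punc_tr hp]
    rcases hvt with ⟨w, hw, rfl⟩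
    have h1 : ‖w‖ ≤ D := by simpa [mem_closedBall, dist_eq_norm] using hD p hp hw
    have h2 : ‖w + z‖ ≤ R := by simpa [mem_closedBall, dist_eq_norm] using hvR
    rw [mem_closedBall, dist_eq_norm, sub_zero]
    calc ‖z‖ = ‖(w + z) - w‖ := by congr 1; abel
      _ ≤ ‖w + z‖ + ‖w‖ := norm_sub_le _ _
      _ ≤ R + D := add_le_add h2 h1
  obtain ⟨C, hCfin, hCcov⟩ := (Metric.totallyBounded_iff).1
    (isCompact_closedBall (0 : Pt d) (R + D)).totallyBounded r hr0
  have hch : ∀ t ∈ tilesAt W (closedBall (0 : Pt d) R),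
      ∃ y ∈ C, S.punc t ∈ ball y r := by
    intro t ht
    have := hCcov (hpunc t ht)
    simpa using this
  choose! f hf1 hf2 using hch
  apply Set.Finite.of_finite_image (f := f)
  · exact hCfin.subset (by rintro y ⟨t, ht, rfl⟩; exact hf1 t ht)
  · intro t1 ht1 t2 ht2 hf
    rcases hPT t1 ht1.1 with ⟨p1, hp1, z1, rfl⟩
    rcases hPT t2 ht2.1 with ⟨p2, hp2, z2, rfl⟩
    apply separation hr0 hr hW hp1 hp2 ht1.1 ht2.1
    have e1 := hf2 _ ht1
    have e2 := hf2 _ ht2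
    rw [punc_tr hp1] at e1
    rw [punc_tr hp2] at e2
    rw [hf] at e1
    rw [mem_ball, dist_eq_norm] at e1 e2
    calc ‖z1 - z2‖ = ‖(z1 - f ((p2.translate z2)) : Pt d) - (z2 - f (p2.translate z2))‖ := by
          congr 1; abel
      _ ≤ ‖z1 - f (p2.translate z2)‖ + ‖z2 - f (p2.translate z2)‖ := norm_sub_le _ _
      _ < r + r := add_lt_add e1 e2
      _ = 2 * r := by ring

end TilingAux5
end
noncomputable section
namespace TilingAux6
open Metric Set Pointwise TilingAux TilingAux2 TilingAux3 TilingAux4 TilingAux5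

variable {d : ℕ} {S : SubstSystem d}

lemma isPartial_trS {P : Set (Tile d)} (h : IsPartialTiling P) (x : Pt d) :
    IsPartialTiling (translateSet P x) := by
  constructor
  · rintro t ⟨s, hs, rfl⟩
    exact isTile_tr (h.1 s hs) x
  · rintro t ⟨s, hs, rfl⟩ t' ⟨s', hs', rfl⟩ hne
    have hss' : s ≠ s' := by rintro rfl; exact hne rfl
    rw [interior_tr, interior_tr]
    rw [← Set.image_inter (f := fun y => y + x) (add_left_injective x),
      h.2 s hs s' hs' hss', Set.image_empty]

lemma psupp_iUnion {ι : Sort*} (f : ι → Set (Tile d)) :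
    psupp (⋃ i, f i) = ⋃ i, psupp (f i) := by
  simp only [psupp]
  ext v
  simp only [Set.mem_iUnion]
  tauto

lemma Omega_trS {T : Set (Tile d)} (hT : T ∈ S.Omega) (u : Pt d) :
    translateSet T u ∈ S.Omega := by
  refine ⟨⟨isPartial_trS hT.1.1 u, ?_⟩, ?_⟩
  · rw [psupp_trS, hT.1.2]
    exact Set.image_univ_of_surjective fun v => ⟨v - u, by simp⟩
  · intro P hPsub hP
    have h1 : translateSet P (-u) ⊆ T := by
      have := trS_mono hPsub (-u)
      rwa [trS_trS, add_neg_cancel, trS_zero] at this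
    obtain ⟨n, p, hp, x, h2⟩ := hT.2 _ h1 (isPatch_trS hP (-u))
    refine ⟨n, p, hp, x + u, ?_⟩
    have h3 := trS_mono h2 u
    rwa [trS_trS, neg_add_cancel, trS_zero, trS_trS] at h3

lemma chain_mono {f : ℕ → Set (Tile d)} (hmono : ∀ i, f i ⊆ f (i+1)) :
    ∀ {i j : ℕ}, i ≤ j → f i ⊆ f j := by
  intro i j hij
  induction j with
  | zero => rw [Nat.le_zero.1 hij]
  | succ j ih =>
    rcases Nat.lt_or_ge i (j+1) with h | h
    · exact (ih (Nat.lt_succ_iff.1 h)).trans (hmono j)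
    · rw [Nat.le_antisymm hij h]

lemma finite_subset_chain {f : ℕ → Set (Tile d)} (hmono : ∀ i, f i ⊆ f (i+1))
    {P : Set (Tile d)} (hfin : P.Finite) (hsub : P ⊆ ⋃ i, f i) : ∃ i, P ⊆ f i := by
  classical
  have hidx : ∀ t ∈ P, ∃ i, t ∈ f i := fun t ht => Set.mem_iUnion.1 (hsub ht)
  choose! I hI using hidx
  refine ⟨hfin.toFinset.sup I, ?_⟩
  intro t ht
  exact chain_mono hmono (Finset.le_sup (hfin.mem_toFinset.2 ht)) (hI t ht)

/-- An increasing union of translated supertile patches covering space is in `Ω`. -/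
lemma union_mem_Omega {f : ℕ → Set (Tile d)}
    (hform : ∀ i, ∃ (m : ℕ) (q : Tile d) (w : Pt d), q ∈ S.proto ∧
      f i = translateSet (S.omegan m q) w)
    (hmono : ∀ i, f i ⊆ f (i+1))
    (hcov : psupp (⋃ i, f i) = univ) : (⋃ i, f i) ∈ S.Omega := by
  have hPTi : ∀ i, ∀ t ∈ f i, PT S t := by
    intro i t ht
    obtain ⟨m, q, w, hq, hfi⟩ := hform i
    rw [hfi] at ht
    rcases ht with ⟨s, hs, rfl⟩
    exact PT_tr (omegan_mem_PT (PT_proto hq) hs) w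
  have hparti : ∀ i, IsPartialTiling (f i) := by
    intro i
    obtain ⟨m, q, w, hq, hfi⟩ := hform i
    rw [hfi]
    exact isPartial_trS (isPatch_omegan (PT_proto hq) m).1 w
  refine ⟨⟨⟨?_, ?_⟩, hcov⟩, ?_⟩
  · rintro t ht
    rcases Set.mem_iUnion.1 ht with ⟨i, hi⟩
    exact PT_isTile (hPTi i t hi)
  · rintro t ht t' ht' hne
    rcases Set.mem_iUnion.1 ht with ⟨i, hi⟩
    rcases Set.mem_iUnion.1 ht' with ⟨j, hj⟩
    have h1 : t ∈ f (max i j) := chain_mono hmono (le_max_left _ _) hi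
    have h2 : t' ∈ f (max i j) := chain_mono hmono (le_max_right _ _) hj
    exact (hparti (max i j)).2 t h1 t' h2 hne
  · intro P hPsub hP
    obtain ⟨i, hPi⟩ := finite_subset_chain hmono hP.2 hPsub
    obtain ⟨m, q, w, hq, hfi⟩ := hform i
    exact ⟨m, q, hq, w, by rw [← hfi]; exact hPi⟩

end TilingAux6
end
noncomputable section
namespace TilingAux7
open Metric Set Pointwise TilingAux TilingAux2 TilingAux3 TilingAux4 TilingAux5 TilingAux6

variable {d : ℕ} {S : SubstSystem d} {G : Subgroup (Pt d ≃ₗᵢ[ℝ] Pt d)} (σ : SymmAction S G)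

lemma act_act (g h : G) (t : Tile d) : σ.act g (σ.act h t) = σ.act (g * h) t :=
  (σ.act_mul g h t).symm

lemma act_inv_act (g : G) (t : Tile d) : σ.act g⁻¹ (σ.act g t) = t := by
  rw [act_act, inv_mul_cancel, σ.act_one]

lemma act_act_inv (g : G) (t : Tile d) : σ.act g (σ.act g⁻¹ t) = t := by
  rw [act_act, mul_inv_cancel, σ.act_one]

lemma act_injective (g : G) {t t' : Tile d} (h : σ.act g t = σ.act g t') : t = t' := by
  have := congrArg (σ.act g⁻¹) h
  rwa [act_inv_act, act_inv_act] at this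

lemma actSet_actSet (g h : G) (W : Set (Tile d)) :
    σ.actSet g (σ.actSet h W) = σ.actSet (g * h) W := by
  simp only [SymmAction.actSet, Set.image_image]
  exact Set.image_congr fun t _ => act_act σ g h t

@[simp] lemma actSet_one (W : Set (Tile d)) : σ.actSet 1 W = W := by
  simp only [SymmAction.actSet]
  have : σ.act 1 = id := funext fun t => σ.act_one t
  rw [this, Set.image_id]

lemma interior_act (g : G) (t : Tile d) :
    interior (σ.act g t).carrier = (g : Pt d ≃ₗᵢ[ℝ] Pt d) '' interior t.carrier := by
  rw [σ.act_carrier]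
  have := ((g : Pt d ≃ₗᵢ[ℝ] Pt d).toHomeomorph).image_interior t.carrier
  simpa using this.symm

lemma isTile_act (g : G) {t : Tile d} (h : t.IsTile) : (σ.act g t).IsTile := by
  rcases h with ⟨e⟩
  have h2 : (σ.act g t).carrier = (g : Pt d ≃ₗᵢ[ℝ] Pt d).toHomeomorph '' t.carrier := by
    rw [σ.act_carrier]; rfl
  refine ⟨?_⟩
  rw [h2]
  exact (((g : Pt d ≃ₗᵢ[ℝ] Pt d).toHomeomorph.image t.carrier).symm.trans e)

lemma PT_act (g : G) {t : Tile d} (h : PT S t) : PT S (σ.act g t) := by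
  rcases h with ⟨p, hp, z, rfl⟩
  rw [σ.act_translate]
  exact ⟨σ.act g p, σ.act_proto g p hp, _, rfl⟩

lemma actSet_trS (g : G) (W : Set (Tile d)) (v : Pt d) :
    σ.actSet g (translateSet W v) = translateSet (σ.actSet g W) ((g : Pt d ≃ₗᵢ[ℝ] Pt d) v) := by
  simp only [SymmAction.actSet, translateSet, Set.image_image]
  exact Set.image_congr fun t _ => σ.act_translate g t v

lemma act_sub_PT (g : G) {t : Tile d} (h : PT S t) :
    S.sub (σ.act g t) = σ.actSet g (S.sub t) := by
  rcases h with ⟨p, hp, z, rfl⟩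
  have l1 : S.sub (σ.act g (p.translate z))
      = translateSet (σ.actSet g (S.sub p)) (S.lam • (g : Pt d ≃ₗᵢ[ℝ] Pt d) z) := by
    rw [σ.act_translate, S.sub_translate]
    show translateSet (S.sub (σ.act g p)) _ = _
    rw [σ.act_sub g p hp]
    rfl
  have l2 : σ.actSet g (S.sub (p.translate z))
      = translateSet (σ.actSet g (S.sub p)) ((g : Pt d ≃ₗᵢ[ℝ] Pt d) (S.lam • z)) := by
    rw [S.sub_translate]
    show σ.actSet g (translateSet (S.sub p) (S.lam • z)) = _
    rw [actSet_trS]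
  rw [l1, l2, LinearIsometryEquiv.map_smul]

lemma subSet_actSet (g : G) {W : Set (Tile d)} (h : ∀ t ∈ W, PT S t) :
    S.subSet (σ.actSet g W) = σ.actSet g (S.subSet W) := by
  simp only [SubstSystem.subSet, SymmAction.actSet, Set.biUnion_image]
  rw [Set.image_iUnion₂]
  exact Set.iUnion₂_congr fun t ht => act_sub_PT σ g (h t ht)

lemma actSet_PT (g : G) {W : Set (Tile d)} (h : ∀ t ∈ W, PT S t) :
    ∀ t ∈ σ.actSet g W, PT S t := by
  rintro t ⟨s, hs, rfl⟩
  exact PT_act σ g (h s hs)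

lemma subIter_actSet (g : G) {W : Set (Tile d)} (h : ∀ t ∈ W, PT S t) (n : ℕ) :
    S.subIter n (σ.actSet g W) = σ.actSet g (S.subIter n W) := by
  induction n with
  | zero => rfl
  | succ n ih =>
    rw [subIter_succ', subIter_succ', ih, subSet_actSet σ g (subIter_PT h n)]

lemma actSet_omegan (g : G) {p : Tile d} (hp : p ∈ S.proto) (n : ℕ) :
    σ.actSet g (S.omegan n p) = S.omegan n (σ.act g p) := by
  rw [omegan_def, omegan_def, ← subIter_actSet σ g (by rintro t rfl; exact PT_proto hp)]
  congr 1
  simp [SymmAction.actSet]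

lemma psupp_actSet (g : G) (W : Set (Tile d)) :
    psupp (σ.actSet g W) = (g : Pt d ≃ₗᵢ[ℝ] Pt d) '' psupp W := by
  simp only [psupp, SymmAction.actSet]
  ext v
  simp only [Set.mem_iUnion, Set.mem_image]
  constructor
  · rintro ⟨t, ⟨s, hs, rfl⟩, hv⟩
    rw [σ.act_carrier] at hv
    rcases hv with ⟨w, hw, rfl⟩
    exact ⟨w, ⟨s, hs, hw⟩, rfl⟩
  · rintro ⟨w, ⟨s, hs, hw⟩, rfl⟩
    exact ⟨σ.act g s, ⟨s, hs, rfl⟩, by rw [σ.act_carrier]; exact ⟨w, hw, rfl⟩⟩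

lemma isPartial_actSet (g : G) {W : Set (Tile d)} (h : IsPartialTiling W) :
    IsPartialTiling (σ.actSet g W) := by
  constructor
  · rintro t ⟨s, hs, rfl⟩
    exact isTile_act σ g (h.1 s hs)
  · rintro t ⟨s, hs, rfl⟩ t' ⟨s', hs', rfl⟩ hne
    have hss' : s ≠ s' := by rintro rfl; exact hne rfl
    rw [interior_act, interior_act,
      ← Set.image_inter (g : Pt d ≃ₗᵢ[ℝ] Pt d).injective,
      h.2 s hs s' hs' hss', Set.image_empty]

lemma isPatch_actSet (g : G) {W : Set (Tile d)} (h : IsPatch W) :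
    IsPatch (σ.actSet g W) := ⟨isPartial_actSet σ g h.1, h.2.image _⟩

lemma Omega_actSet (g : G) {T : Set (Tile d)} (hT : T ∈ S.Omega) :
    σ.actSet g T ∈ S.Omega := by
  refine ⟨⟨isPartial_actSet σ g hT.1.1, ?_⟩, ?_⟩
  · rw [psupp_actSet, hT.1.2]
    exact Set.image_univ_of_surjective (g : Pt d ≃ₗᵢ[ℝ] Pt d).surjective
  · intro P hPsub hP
    have h1 : σ.actSet g⁻¹ P ⊆ T := by
      have := Set.image_mono (f := σ.act g⁻¹) hPsub
      rw [show σ.act g⁻¹ '' σ.actSet g T = σ.actSet g⁻¹ (σ.actSet g T) from rfl,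
        actSet_actSet, inv_mul_cancel, actSet_one] at this
      exact this
    obtain ⟨n, p, hp, x, h2⟩ := hT.2 _ h1 (isPatch_actSet σ g⁻¹ hP)
    refine ⟨n, σ.act g p, σ.act_proto g p hp, (g : Pt d ≃ₗᵢ[ℝ] Pt d) x, ?_⟩
    have h3 := Set.image_mono (f := σ.act g) h2
    rw [show σ.act g '' σ.actSet g⁻¹ P = σ.actSet g (σ.actSet g⁻¹ P) from rfl,
      actSet_actSet, mul_inv_cancel, actSet_one] at h3
    rw [show σ.act g '' translateSet (S.omegan n p) x
        = σ.actSet g (translateSet (S.omegan n p) x) from rfl,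
      actSet_trS, actSet_omegan σ g hp] at h3
    exact h3

end TilingAux7
end
noncomputable section
namespace TilingAux8
open Metric Set Pointwise TilingAux TilingAux2 TilingAux3 TilingAux4 TilingAux5 TilingAux6 TilingAux7

variable {d : ℕ} {S : SubstSystem d}

lemma subIter_bijOn (hA3 : S.SubBijective) : ∀ k : ℕ, Set.BijOn (S.subIter k) S.Omega S.Omega := by
  intro k
  induction k with
  | zero => exact Set.bijOn_id _
  | succ k ih =>
    have : S.subIter (k+1) = S.subSet ∘ S.subIter k := by
      funext P; exact subIter_succ' k P
    rw [this]
    exact hA3.comp ih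

set_option maxHeartbeats 1000000 in
lemma main_construction {G : Subgroup (Pt d ≃ₗᵢ[ℝ] Pt d)} [Finite G] (σ : SymmAction S G)
    (hA1 : S.Primitive) (hA3 : S.SubBijective) (hfree : σ.FreeOnProto)
    {T : Set (Tile d)} (hT : T ∈ S.OmegaPunc) (R : ℝ) :
    ∃ T' ∈ S.OmegaPunc, tilesAt T (ball (0 : Pt d) R) = tilesAt T' (ball (0 : Pt d) R) ∧
      ∀ (x : Pt d) (g : G), σ.actSet g T' = translateSet T' x → g = 1 ∧ x = 0 := by
  classical
  obtain ⟨rr, hr0, hr⟩ := exists_r (S := S)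
  obtain ⟨D, hD0, hD⟩ := exists_D (S := S)
  have hL1 : 1 < S.lam := S.one_lt_lam
  have hL0 : (0:ℝ) < S.lam := lam_pos
  have hLne : (S.lam : ℝ) ≠ 0 := lam_ne
  have hTΩ : T ∈ S.Omega := hT.1
  -- the initial patch
  set R' : ℝ := max R 0 + 2*D + 1 with hR'def
  have hR'0 : 0 < R' := by
    have : (0:ℝ) ≤ max R 0 := le_max_right R 0
    positivity
  set P := tilesAt T (closedBall (0:Pt d) R') with hPdef
  have hPsubT : P ⊆ T := fun t ht => ht.1
  have hTtilesPT : ∀ t ∈ T, PT S t := Omega_tiles_PT hTΩ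
  have hPfin : P.Finite := tilesAt_finite hr0 hr hD hTΩ.1.1 hTtilesPT
  have hPpatch : IsPatch P := ⟨isPartial_subset hTΩ.1.1 hPsubT, hPfin⟩
  obtain ⟨n, p, hp, yin, hPQ0⟩ := hTΩ.2 P hPsubT hPpatch
  -- primitivity data: a deep occurrence of `p` in a supertile of `p`
  obtain ⟨N, hN⟩ := hA1
  obtain ⟨K0, hK0⟩ := pow_unbounded_of_one_lt (16 * S.lam^N * D / rr + 1) hL1
  set K := K0 + 1 with hKdef
  have hKbig : 16 * S.lam^N * D / rr + 1 < S.lam ^ K :=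
    lt_of_lt_of_le hK0 (pow_le_pow_right₀ (le_of_lt hL1) (by omega))
  set M := K + N with hMdef
  have hKM : S.lam ^ K ≤ S.lam ^ M :=
    pow_le_pow_right₀ (le_of_lt hL1) (by omega)
  have hc0pos : 0 < 16 * S.lam^N * D / rr := by
    have := lam_pow_pos (S := S) N
    positivity
  have hLM1 : 1 < S.lam^M := by linarith
  have hLMne : S.lam^M - 1 ≠ 0 := by linarith
  have hLMgt : 16 * S.lam^N * D / rr < S.lam^M - 1 := by linarith
  -- tile of `ω^K(p)` containing 0
  have h0p : (0:Pt d) ∈ p.carrier := interior_subset (S.proto_zero_mem p hp)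
  have h0K : (0:Pt d) ∈ psupp (S.omegan K p) := by
    rw [psupp_omegan (PT_proto hp)]
    exact ⟨0, h0p, smul_zero _⟩
  have hts : ∃ ts ∈ S.omegan K p, (0:Pt d) ∈ ts.carrier := by
    simpa [psupp] using h0K
  obtain ⟨ts, htsK, h0ts⟩ := hts
  obtain ⟨q, hq, zs, rfl⟩ := omegan_mem_PT (PT_proto hp) htsK
  have hzs : ‖zs‖ ≤ D := by
    rcases h0ts with ⟨w, hw, hw0⟩
    have h1 : ‖w‖ ≤ D := by simpa [mem_closedBall, dist_eq_norm] using hD q hq hw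
    have : zs = -w := by
      have : w + zs = 0 := hw0
      linear_combination (norm := module) this
    rw [this, norm_neg]
    exact h1
  obtain ⟨a', ha'⟩ := hN q hq p hp
  have ha'n : ‖a'‖ ≤ S.lam^N * D := by
    have h1 : a' ∈ (p.translate a').carrier := ⟨0, h0p, by simp⟩
    have h2 : (p.translate a').carrier ⊆ psupp (S.omegan N q) := by
      intro v hv
      exact Set.mem_biUnion ha' hv
    rw [psupp_omegan (PT_proto hq)] at h2
    rcases h2 h1 with ⟨w, hw, hwe⟩
    have h3 : ‖w‖ ≤ D := by simpa [mem_closedBall, dist_eq_norm] using hD q hq hw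
    rw [← hwe, norm_smul]
    rw [Real.norm_eq_abs, abs_of_pos (lam_pow_pos N)]
    have := lam_pow_pos (S := S) N
    calc S.lam ^ N * ‖w‖ ≤ S.lam ^ N * D := by nlinarith
      _ = S.lam ^ N * D := rfl
  set a : Pt d := a' + S.lam^N • zs with hadef
  have han : ‖a‖ ≤ 2 * (S.lam^N * D) := by
    calc ‖a‖ ≤ ‖a'‖ + ‖S.lam^N • zs‖ := norm_add_le _ _
      _ ≤ S.lam^N * D + S.lam^N * D := by
          apply add_le_add ha'n
          rw [norm_smul, Real.norm_eq_abs, abs_of_pos (lam_pow_pos N)]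
          have := lam_pow_pos (S := S) N
          nlinarith
      _ = 2 * (S.lam^N * D) := by ring
  have hpa : p.translate a ∈ S.omegan M p := by
    have s1 : (p.translate a').translate (S.lam^N • zs)
        ∈ translateSet (S.omegan N q) (S.lam^N • zs) := mem_trS ha'
    rw [tr_tr] at s1
    rw [← omegan_tr] at s1
    have s3 : S.omegan N (q.translate zs) ⊆ S.omegan M p := by
      show S.subIter N {q.translate zs} ⊆ S.omegan M p
      calc S.subIter N {q.translate zs}
          ⊆ S.subIter N (S.subIter K {p}) :=
            subIter_mono (Set.singleton_subset_iff.2 htsK) N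
        _ = S.subIter (K + N) {p} := (subIter_add K N {p}).symm
        _ = S.omegan M p := rfl
    exact s3 s1
  set b : Pt d := (S.lam^M - 1)⁻¹ • a with hbdef
  have hbnorm : ‖b‖ ≤ rr/8 := by
    have hu : 0 < S.lam^M - 1 := by linarith
    rw [hbdef, norm_smul, Real.norm_eq_abs, abs_of_pos (inv_pos.2 hu)]
    rw [inv_mul_le_iff₀ hu]
    have h16 : 16 * S.lam^N * D < rr * (S.lam^M - 1) := by
      rw [div_lt_iff₀ hr0] at hLMgt
      nlinarith
    nlinarith
  -- the nested sequence of supertile patches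
  have hM1 : 1 ≤ M := by omega
  clear_value K M a b
  clear hadef hKdef hMdef hKbig hKM hc0pos hLMgt hK0 ha' ha'n han hzs h0ts htsK h0K hq
  set al : ℕ → ℝ := fun j => (S.lam^(j*M) - 1)/(S.lam^M - 1) with hal
  set Y : ℕ → Pt d := fun j => yin - (S.lam^n * al j) • a with hY
  have hY0 : Y 0 = yin := by
    simp [hY, hal]
  have hK1 : ∀ j, Y j = Y (j+1) + S.lam^(n + j*M) • a := by
    intro j
    have hsc : S.lam^n * al (j+1) - S.lam^n * al j = S.lam^(n + j*M) := by
      simp only [hal]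
      have e1 : (j+1)*M = j*M + M := by ring
      rw [e1, pow_add, pow_add]
      field_simp
      ring
    simp only [hY]
    linear_combination (norm := module) hsc • a
  have hYid : ∀ j, (S.lam^(n+j*M))⁻¹ • Y j
      = (S.lam^(n+j*M))⁻¹ • yin - b + (S.lam^(j*M))⁻¹ • b := by
    intro j
    have hsc : (S.lam^(n+j*M))⁻¹ * (S.lam^n * al j)
        = (S.lam^M - 1)⁻¹ - (S.lam^(j*M))⁻¹ * (S.lam^M - 1)⁻¹ := by
      simp only [hal]
      rw [pow_add]
      field_simp
    simp only [hY, hbdef]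
    linear_combination (norm := module) (-1 : ℝ) • hsc • a
  -- power inequalities
  have hposj : ∀ j : ℕ, (0:ℝ) < S.lam ^ j := fun j => lam_pow_pos j
  have hinv1 : ∀ j, (S.lam^(n+j*M))⁻¹ ≤ (S.lam^j)⁻¹ := by
    intro j
    apply inv_anti₀ (hposj j)
    apply pow_le_pow_right₀ (le_of_lt hL1)
    calc j = j * 1 := (mul_one j).symm
      _ ≤ j * M := Nat.mul_le_mul_left j hM1
      _ ≤ n + j * M := Nat.le_add_left _ _
  have hinv2 : ∀ j, (S.lam^(j*M))⁻¹ ≤ (S.lam^j)⁻¹ := by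
    intro j
    apply inv_anti₀ (hposj j)
    apply pow_le_pow_right₀ (le_of_lt hL1)
    calc j = j * 1 := (mul_one j).symm
      _ ≤ j * M := Nat.mul_le_mul_left j hM1
  have hYbound : ∀ j, ‖(S.lam^(n+j*M))⁻¹ • Y j‖ ≤ (S.lam^j)⁻¹ * (‖yin‖ + ‖b‖) + ‖b‖ := by
    intro j
    rw [hYid j]
    have i1 : ‖(S.lam^(n+j*M))⁻¹ • yin‖ ≤ (S.lam^j)⁻¹ * ‖yin‖ := by
      rw [norm_smul, Real.norm_eq_abs, abs_of_pos (inv_pos.2 (hposj _))]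
      have := norm_nonneg yin
      nlinarith [hinv1 j]
    have i2 : ‖(S.lam^(j*M))⁻¹ • b‖ ≤ (S.lam^j)⁻¹ * ‖b‖ := by
      rw [norm_smul, Real.norm_eq_abs, abs_of_pos (inv_pos.2 (hposj _))]
      have := norm_nonneg b
      nlinarith [hinv2 j]
    calc ‖(S.lam^(n+j*M))⁻¹ • yin - b + (S.lam^(j*M))⁻¹ • b‖
        ≤ ‖(S.lam^(n+j*M))⁻¹ • yin - b‖ + ‖(S.lam^(j*M))⁻¹ • b‖ := norm_add_le _ _
      _ ≤ (‖(S.lam^(n+j*M))⁻¹ • yin‖ + ‖b‖) + ‖(S.lam^(j*M))⁻¹ • b‖ := by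
          have := norm_sub_le ((S.lam^(n+j*M))⁻¹ • yin) b
          linarith
      _ ≤ ((S.lam^j)⁻¹ * ‖yin‖ + ‖b‖) + (S.lam^j)⁻¹ * ‖b‖ := by linarith
      _ ≤ (S.lam^j)⁻¹ * (‖yin‖ + ‖b‖) + ‖b‖ := by ring_nf; linarith
  -- the patches
  set Q : ℕ → Set (Tile d) := fun j => translateSet (S.omegan (n + j*M) p) (Y j) with hQ
  have hQmono : ∀ j, Q j ⊆ Q (j+1) := by
    intro j
    have core : translateSet (S.omegan (n+j*M) p) (S.lam^(n+j*M) • a)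
        ⊆ S.omegan (n + (j+1)*M) p := by
      have h1 : S.omegan (n+j*M) (p.translate a)
          = translateSet (S.omegan (n+j*M) p) (S.lam^(n+j*M) • a) := omegan_tr _ _ _
      rw [← h1]
      show S.subIter (n+j*M) {p.translate a} ⊆ _
      calc S.subIter (n+j*M) {p.translate a}
          ⊆ S.subIter (n+j*M) (S.subIter M {p}) :=
            subIter_mono (Set.singleton_subset_iff.2 hpa) _
        _ = S.subIter (M + (n+j*M)) {p} := (subIter_add M (n+j*M) {p}).symm
        _ = S.omegan (n+(j+1)*M) p := by rw [omegan_def]; congr 1; ring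
    have h2 : Q j = translateSet (translateSet (S.omegan (n+j*M) p) (S.lam^(n+j*M) • a))
        (Y (j+1)) := by
      rw [trS_trS]
      show translateSet (S.omegan (n + j*M) p) (Y j) = _
      rw [hK1 j]
      congr 1
      abel
    rw [h2]
    show _ ⊆ translateSet (S.omegan (n + (j+1)*M) p) (Y (j+1))
    exact (trS_mono core _)
  have hQform : ∀ j, ∃ (m : ℕ) (qq : Tile d) (w : Pt d), qq ∈ S.proto ∧
      Q j = translateSet (S.omegan m qq) w := fun j => ⟨n + j*M, p, Y j, hp, rfl⟩
  set T' : Set (Tile d) := ⋃ j, Q j with hT'def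
  have hPQ : P ⊆ Q 0 := by
    rw [hQ]
    simpa [hY0] using hPQ0
  have hPT' : P ⊆ T' := hPQ.trans (Set.subset_iUnion Q 0)
  -- covering
  have hcov : psupp T' = univ := by
    rw [hT'def, psupp_iUnion]
    apply Set.eq_univ_of_forall
    intro v
    obtain ⟨j, hj⟩ := pow_unbounded_of_one_lt ((‖v - yin‖ + ‖b‖) * (4/rr)) hL1
    rw [Set.mem_iUnion]
    refine ⟨j, ?_⟩
    rw [hQ, psupp_trS, psupp_omegan (PT_proto hp)]
    have hw : (S.lam^(n+j*M))⁻¹ • (v - Y j) ∈ p.carrier := by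
      apply interior_subset
      apply hr p hp
      rw [mem_ball, dist_eq_norm, sub_zero]
      have hsplit : (S.lam^(n+j*M))⁻¹ • (v - Y j)
          = (S.lam^(n+j*M))⁻¹ • (v - yin) + b - (S.lam^(j*M))⁻¹ • b := by
        rw [smul_sub, hYid j]
        module
      rw [hsplit]
      have i1 : ‖(S.lam^(n+j*M))⁻¹ • (v - yin)‖ ≤ (S.lam^j)⁻¹ * ‖v - yin‖ := by
        rw [norm_smul, Real.norm_eq_abs, abs_of_pos (inv_pos.2 (hposj _))]
        have := norm_nonneg (v - yin)
        nlinarith [hinv1 j]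
      have i2 : ‖(S.lam^(j*M))⁻¹ • b‖ ≤ (S.lam^j)⁻¹ * ‖b‖ := by
        rw [norm_smul, Real.norm_eq_abs, abs_of_pos (inv_pos.2 (hposj _))]
        have := norm_nonneg b
        nlinarith [hinv2 j]
      have i3 : (S.lam^j)⁻¹ * (‖v - yin‖ + ‖b‖) < rr/4 := by
        rw [inv_mul_lt_iff₀ (hposj j)]
        calc ‖v - yin‖ + ‖b‖ = (‖v - yin‖ + ‖b‖) * (4/rr) * (rr/4) := by
              field_simp
          _ < S.lam ^ j * (rr/4) := mul_lt_mul_of_pos_right hj (by positivity)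
      calc ‖(S.lam^(n+j*M))⁻¹ • (v - yin) + b - (S.lam^(j*M))⁻¹ • b‖
          ≤ ‖(S.lam^(n+j*M))⁻¹ • (v - yin)‖ + ‖b‖ + ‖(S.lam^(j*M))⁻¹ • b‖ := by
            have t1 := norm_add_le ((S.lam^(n+j*M))⁻¹ • (v - yin)) b
            have t2 := norm_sub_le ((S.lam^(n+j*M))⁻¹ • (v - yin) + b) ((S.lam^(j*M))⁻¹ • b)
            linarith
        _ ≤ (S.lam^j)⁻¹ * ‖v - yin‖ + rr/8 + (S.lam^j)⁻¹ * ‖b‖ := by linarith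
        _ ≤ (S.lam^j)⁻¹ * (‖v - yin‖ + ‖b‖) + rr/8 := by ring_nf; linarith
        _ < rr/4 + rr/8 := by linarith
        _ < rr := by linarith
    refine ⟨v - Y j, ?_, by simp⟩
    rw [Set.mem_smul_set_iff_inv_smul_mem₀ (lam_pow_ne _)]
    exact hw
  have hT'Ω : T' ∈ S.Omega := union_mem_Omega hQform hQmono hcov
  -- T' is in the punctured hull
  obtain ⟨t0, ht0T, hpunc0⟩ := hT.2
  obtain ⟨p0, hp0, ht0e⟩ := hpunc0
  have h0t0 : (0 : Pt d) ∈ t0.carrier := by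
    rw [ht0e, tr_zero]
    exact interior_subset (S.proto_zero_mem p0 hp0)
  have ht0P : t0 ∈ P := by
    refine ⟨ht0T, 0, h0t0, ?_⟩
    rw [mem_closedBall, dist_self]
    linarith
  have hT'punc : T' ∈ S.OmegaPunc := ⟨hT'Ω, t0, hPT' ht0P, p0, hp0, ht0e⟩
  -- the tiles near the origin agree
  have hRsub : ball (0:Pt d) R ⊆ closedBall (0:Pt d) R' := by
    intro v hv
    rw [mem_ball] at hv
    rw [mem_closedBall]
    have : R ≤ R' := by
      have := le_max_left R 0
      rw [hR'def]; linarith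
    linarith
  have claimT : tilesAt T (ball (0:Pt d) R) = {t ∈ P | (t.carrier ∩ ball (0:Pt d) R).Nonempty} := by
    ext t
    constructor
    · rintro ⟨htT, v, hv1, hv2⟩
      exact ⟨⟨htT, v, hv1, hRsub hv2⟩, v, hv1, hv2⟩
    · rintro ⟨htP, hne⟩
      exact ⟨hPsubT htP, hne⟩
  have claimT' : tilesAt T' (ball (0:Pt d) R)
      = {t ∈ P | (t.carrier ∩ ball (0:Pt d) R).Nonempty} := by
    ext t
    constructor
    · rintro ⟨htT', v, hvt, hvR⟩
      refine ⟨?_, v, hvt, hvR⟩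
      obtain ⟨p2, hp2, z2, rfl⟩ := Omega_tiles_PT hT'Ω t htT'
      have hcar : (p2.translate z2).carrier ⊆ closedBall (0:Pt d) R' := by
        rintro u ⟨w, hw, rfl⟩
        rcases hvt with ⟨w0, hw0, hw0e⟩
        have n1 : ‖w‖ ≤ D := by simpa [mem_closedBall, dist_eq_norm] using hD p2 hp2 hw
        have n2 : ‖w0‖ ≤ D := by simpa [mem_closedBall, dist_eq_norm] using hD p2 hp2 hw0
        have n3 : ‖v‖ < R := by simpa [mem_ball, dist_eq_norm] using hvR
        rw [mem_closedBall, dist_eq_norm, sub_zero]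
        have hz2 : z2 = v - w0 := by
          have : w0 + z2 = v := hw0e
          linear_combination (norm := module) this
        rw [hz2]
        have : ‖w + (v - w0)‖ ≤ ‖v‖ + ‖w‖ + ‖w0‖ := by
          calc ‖w + (v - w0)‖ ≤ ‖w + v‖ + ‖w0‖ := by
                have := norm_sub_le (w + v) w0
                have he : w + (v - w0) = (w + v) - w0 := by abel
                rw [he]; linarith
            _ ≤ ‖w‖ + ‖v‖ + ‖w0‖ := by
                have := norm_add_le w v
                linarith
            _ = ‖v‖ + ‖w‖ + ‖w0‖ := by ring
        have hRmax : R ≤ max R 0 := le_max_left R 0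
        rw [hR'def]
        linarith
      have hUsub : ball z2 rr ⊆ ⋃ t2 ∈ hPfin.toFinset, t2.carrier := by
        intro u hu
        have hu1 : u ∈ closedBall (0:Pt d) R' :=
          hcar (interior_subset (ball_subset_interior hr hp2 z2 hu))
        obtain ⟨tu, htuT, hutu⟩ := Omega_cover hTΩ u
        have htuP : tu ∈ P := ⟨htuT, u, hutu, hu1⟩
        exact Set.mem_biUnion (hPfin.mem_toFinset.2 htuP) hutu
      obtain ⟨t2, ht2F, w', hw'1, hw'2⟩ := baire_finite hPfin.toFinset
        (fun t2 ht2 => (isCompact_carrier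
          (hTΩ.1.1.1 t2 (hPsubT (hPfin.mem_toFinset.1 ht2)))).isClosed)
        (ball z2 rr) isOpen_ball ⟨z2, mem_ball_self hr0⟩ hUsub
      have ht2P : t2 ∈ P := hPfin.mem_toFinset.1 ht2F
      have heq : t2 = p2.translate z2 := by
        by_contra hne2
        have hdis := hT'Ω.1.1.2 t2 (hPT' ht2P) (p2.translate z2) htT' hne2
        have : w' ∈ interior t2.carrier ∩ interior (p2.translate z2).carrier :=
          ⟨hw'1, ball_subset_interior hr hp2 z2 hw'2⟩
        rw [hdis] at this
        exact this
      rw [← heq]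
      exact ht2P
    · rintro ⟨htP, hne⟩
      exact ⟨hPT' htP, hne⟩
  -- the tower of preimage tilings
  set TT : ℕ → Set (Tile d) := fun j0 =>
    ⋃ i, translateSet (S.omegan (i*M) p) ((S.lam^(n + j0*M))⁻¹ • Y (j0 + i)) with hTT
  have hTTPT : ∀ j0, ∀ t ∈ TT j0, PT S t := by
    intro j0 t ht
    rcases Set.mem_iUnion.1 ht with ⟨i, hi⟩
    rcases hi with ⟨s1, hs1, rfl⟩
    exact PT_tr (omegan_mem_PT (PT_proto hp) hs1) _
  have hcore : ∀ m2 : ℕ, translateSet (S.omegan m2 p) (S.lam^m2 • a) ⊆ S.omegan (m2 + M) p := by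
    intro m2
    have h1 : S.omegan m2 (p.translate a)
        = translateSet (S.omegan m2 p) (S.lam^m2 • a) := omegan_tr _ _ _
    rw [← h1]
    show S.subIter m2 {p.translate a} ⊆ _
    calc S.subIter m2 {p.translate a}
        ⊆ S.subIter m2 (S.subIter M {p}) :=
          subIter_mono (Set.singleton_subset_iff.2 hpa) _
      _ = S.subIter (M + m2) {p} := (subIter_add M m2 {p}).symm
      _ = S.omegan (m2 + M) p := by rw [omegan_def]; congr 1; ring
  have hTTmono : ∀ j0 i, translateSet (S.omegan (i*M) p) ((S.lam^(n + j0*M))⁻¹ • Y (j0 + i))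
      ⊆ translateSet (S.omegan ((i+1)*M) p) ((S.lam^(n + j0*M))⁻¹ • Y (j0 + (i+1))) := by
    intro j0 i
    have hoff : (S.lam^(n + j0*M))⁻¹ • Y (j0 + i)
        = S.lam^(i*M) • a + (S.lam^(n + j0*M))⁻¹ • Y (j0 + (i+1)) := by
      have h1 : Y (j0 + i) = Y (j0 + i + 1) + S.lam^(n + (j0 + i)*M) • a := hK1 (j0 + i)
      have h2 : (n + (j0 + i)*M) = (n + j0*M) + i*M := by ring
      have h3 : (S.lam^(n + j0*M))⁻¹ * S.lam^(n + (j0 + i)*M) = S.lam^(i*M) := by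
        have e2 : S.lam ^ (n + j0*M + i*M) = S.lam ^ (n + j0*M) * S.lam ^ (i*M) :=
          pow_add _ _ _
        rw [h2, e2, ← mul_assoc, inv_mul_cancel₀ (lam_pow_ne (S := S) _), one_mul]
      have h4 : j0 + (i+1) = j0 + i + 1 := by ring
      rw [h4, h1, smul_add, smul_smul, h3]
      abel
    rw [hoff]
    have h5 : translateSet (S.omegan (i*M) p)
          (S.lam^(i*M) • a + (S.lam^(n + j0*M))⁻¹ • Y (j0 + (i+1)))
        = translateSet (translateSet (S.omegan (i*M) p) (S.lam^(i*M) • a))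
          ((S.lam^(n + j0*M))⁻¹ • Y (j0 + (i+1))) := by
      rw [trS_trS]
    rw [h5]
    have h6 := trS_mono (hcore (i*M)) ((S.lam^(n + j0*M))⁻¹ • Y (j0 + (i+1)))
    have h7 : (i*M) + M = (i+1)*M := by ring
    rw [h7] at h6
    exact h6
  have hsubTT : ∀ j0, S.subIter (n + j0*M) (TT j0) = T' := by
    intro j0
    show S.subIter (n + j0*M)
        (⋃ i, translateSet (S.omegan (i*M) p) ((S.lam^(n + j0*M))⁻¹ • Y (j0 + i))) = T'
    rw [subIter_iUnion]
    have hterm : ∀ i, S.subIter (n + j0*M)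
        (translateSet (S.omegan (i*M) p) ((S.lam^(n + j0*M))⁻¹ • Y (j0 + i))) = Q (j0 + i) := by
      intro i
      rw [subIter_trS, smul_inv_smul₀ (lam_pow_ne _)]
      have hAB : S.subIter (n + j0*M) (S.omegan (i*M) p) = S.omegan (n + (j0+i)*M) p := by
        rw [omegan_def, ← subIter_add]
        show S.subIter (i*M + (n + j0*M)) {p} = S.subIter (n + (j0+i)*M) {p}
        congr 1
        ring
      rw [hAB]
    rw [Set.iUnion_congr hterm]
    apply subset_antisymm
    · intro t ht
      rcases Set.mem_iUnion.1 ht with ⟨i, hi⟩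
      exact Set.mem_iUnion.2 ⟨j0 + i, hi⟩
    · intro t ht
      rcases Set.mem_iUnion.1 ht with ⟨j, hj⟩
      exact Set.mem_iUnion.2 ⟨j, chain_mono hQmono (Nat.le_add_left j j0) hj⟩
  have hTTcov : ∀ j0, psupp (TT j0) = univ := by
    intro j0
    have h1 : psupp T' = S.lam^(n + j0*M) • psupp (TT j0) := by
      rw [← hsubTT j0, psupp_subIter (hTTPT j0)]
    rw [hcov] at h1
    apply Set.eq_univ_of_forall
    intro v
    have h2 : S.lam^(n + j0*M) • v ∈ S.lam^(n + j0*M) • psupp (TT j0) := by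
      rw [← h1]; trivial
    rcases h2 with ⟨u, hu, hue⟩
    have hvu : v = u :=
      (smul_right_injective (Pt d) (lam_pow_ne (S := S) (n + j0*M)) hue).symm
    rw [hvu]
    exact hu
  have hTTΩ : ∀ j0, TT j0 ∈ S.Omega := by
    intro j0
    exact union_mem_Omega (S := S) (f := fun i =>
        translateSet (S.omegan (i*M) p) ((S.lam^(n + j0*M))⁻¹ • Y (j0 + i)))
      (fun i => ⟨i*M, p, _, hp, rfl⟩) (hTTmono j0) (hTTcov j0)
  have htile : ∀ j0, p.translate ((S.lam^(n + j0*M))⁻¹ • Y j0) ∈ TT j0 := by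
    intro j0
    have h1 : p.translate ((S.lam^(n + j0*M))⁻¹ • Y (j0 + 0))
        ∈ translateSet (S.omegan (0*M) p) ((S.lam^(n + j0*M))⁻¹ • Y (j0 + 0)) := by
      apply mem_trS
      show p ∈ S.subIter (0*M) {p}
      rw [show 0*M = 0 by ring]
      rfl
    have h2 : p.translate ((S.lam^(n + j0*M))⁻¹ • Y (j0 + 0)) ∈ TT j0 := by
      show _ ∈ ⋃ i, translateSet (S.omegan (i*M) p) ((S.lam^(n + j0*M))⁻¹ • Y (j0 + i))
      exact Set.mem_iUnion.2 ⟨0, h1⟩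
    simpa using h2
  have hinj : ∀ k2, Set.InjOn (S.subIter k2) S.Omega :=
    fun k2 => (subIter_bijOn hA3 k2).injOn
  -- aperiodicity of T'
  have haper : ∀ v : Pt d, translateSet T' v = T' → v = 0 := by
    intro v hv
    obtain ⟨j0, hj0⟩ := pow_unbounded_of_one_lt (‖v‖ * (2*rr)⁻¹) hL1
    have hvk : ‖(S.lam^(n + j0*M))⁻¹ • v‖ < 2*rr := by
      rw [norm_smul, Real.norm_eq_abs, abs_of_pos (inv_pos.2 (hposj _))]
      have i1 : (S.lam^(n + j0*M))⁻¹ * ‖v‖ ≤ (S.lam^j0)⁻¹ * ‖v‖ := by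
        have := norm_nonneg v
        nlinarith [hinv1 j0]
      have i2 : (S.lam^j0)⁻¹ * ‖v‖ < 2*rr := by
        rw [inv_mul_lt_iff₀ (hposj j0)]
        calc ‖v‖ = ‖v‖ * (2*rr)⁻¹ * (2*rr) := by field_simp
          _ < S.lam ^ j0 * (2*rr) := mul_lt_mul_of_pos_right hj0 (by linarith)
      linarith
    set vk := (S.lam^(n + j0*M))⁻¹ • v with hvkdef
    have htr : translateSet (TT j0) vk = TT j0 := by
      apply hinj (n + j0*M) (Omega_trS (hTTΩ j0) vk) (hTTΩ j0)
      rw [subIter_trS, hsubTT j0, smul_inv_smul₀ (lam_pow_ne _), hv]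
    set cc := (S.lam^(n + j0*M))⁻¹ • Y j0 with hccdef
    have ht1 : p.translate cc ∈ TT j0 := htile j0
    have ht2 : p.translate (cc + vk) ∈ TT j0 := by
      rw [← htr]
      rw [← tr_tr]
      exact mem_trS ht1
    have heq2 : p.translate cc = p.translate (cc + vk) := by
      apply separation hr0 hr (hTTΩ j0).1.1 hp hp ht1 ht2
      have : cc - (cc + vk) = -vk := by abel
      rw [this, norm_neg]
      exact hvk
    have hvk0 : vk = 0 := by
      have h3 := (punc_unique hp hp heq2).2
      have h4 : cc + vk - cc = (0:Pt d) := by rw [← h3]; abel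
      calc vk = cc + vk - cc := by abel
        _ = 0 := h4
    have : v = S.lam^(n + j0*M) • vk := by
      rw [hvkdef, smul_inv_smul₀ (lam_pow_ne _)]
    rw [this, hvk0, smul_zero]
  -- conclusion
  refine ⟨T', hT'punc, by rw [claimT, claimT'], ?_⟩
  intro x g hsym
  set gE : Pt d ≃ₗᵢ[ℝ] Pt d := (g : Pt d ≃ₗᵢ[ℝ] Pt d) with hgE
  set m := orderOf g with hmdef
  have hm0 : 0 < m := orderOf_pos g
  have hmne : (m : ℝ) ≠ 0 := Nat.cast_ne_zero.2 (Nat.pos_iff_ne_zero.1 hm0)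
  set sv : ℕ → Pt d := fun i => ∑ t2 ∈ Finset.range i, (gE^t2) x with hsv
  have hsv0 : sv 0 = 0 := by simp [hsv]
  have hsvsucc : ∀ i, sv (i+1) = x + gE (sv i) := by
    intro i
    show (∑ t2 ∈ Finset.range (i+1), (gE^t2) x) = x + gE (∑ t2 ∈ Finset.range i, (gE^t2) x)
    rw [Finset.sum_range_succ']
    rw [map_sum gE (fun t2 => (gE^t2) x) (Finset.range i)]
    have h2 : ∀ t2, (gE^(t2+1)) x = gE ((gE^t2) x) := by
      intro t2
      rw [pow_succ']
      rfl
    rw [Finset.sum_congr rfl (fun t2 _ => h2 t2)]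
    have h3 : (gE^(0:ℕ)) x = x := by
      rw [pow_zero]
      rfl
    rw [h3]
    abel
  have hiter : ∀ i, σ.actSet (g^i) T' = translateSet T' (sv i) := by
    intro i
    induction i with
    | zero =>
      rw [pow_zero, actSet_one σ, hsv0, trS_zero]
    | succ i ih =>
      rw [pow_succ', ← actSet_actSet σ g (g^i), ih, actSet_trS, hsym, trS_trS, hsvsucc i]
  have hper : translateSet T' (sv m) = T' := by
    have h1 := hiter m
    rw [hmdef, pow_orderOf_eq_one g, actSet_one σ] at h1
    exact h1.symm
  have hsm : sv m = 0 := haper _ hper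
  have hsb : ∀ i, i ≤ m → ‖sv i‖ ≤ (m:ℝ) * ‖x‖ := by
    intro i him
    calc ‖sv i‖ ≤ ∑ t2 ∈ Finset.range i, ‖(gE^t2) x‖ := norm_sum_le _ _
      _ = ∑ t2 ∈ Finset.range i, ‖x‖ :=
          Finset.sum_congr rfl (fun t2 _ => (gE^t2).norm_map x)
      _ = (i:ℝ) * ‖x‖ := by
          rw [Finset.sum_const, Finset.card_range, nsmul_eq_mul]
      _ ≤ (m:ℝ) * ‖x‖ := by
          have h4 : (i:ℝ) ≤ (m:ℝ) := Nat.cast_le.2 him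
          nlinarith [norm_nonneg x]
  set eh : Pt d := -((m:ℝ)⁻¹ • ∑ i ∈ Finset.range m, sv i) with hehdef
  have hgeh : gE eh = eh + x := by
    have h1 : gE (∑ i ∈ Finset.range m, sv i)
        = (∑ i ∈ Finset.range m, sv i) - (m:ℝ) • x := by
      rw [map_sum gE sv (Finset.range m)]
      have h2 : ∀ i, gE (sv i) = sv (i+1) - x := by
        intro i
        rw [hsvsucc i]
        abel
      rw [Finset.sum_congr rfl (fun i _ => h2 i)]
      rw [Finset.sum_sub_distrib]
      have h3 : ∑ i ∈ Finset.range m, sv (i+1) = ∑ i ∈ Finset.range m, sv i := by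
        have h4 : ∑ i ∈ Finset.range (m+1), sv i
            = (∑ i ∈ Finset.range m, sv (i+1)) + sv 0 := Finset.sum_range_succ' sv m
        have h5 : ∑ i ∈ Finset.range (m+1), sv i
            = (∑ i ∈ Finset.range m, sv i) + sv m := Finset.sum_range_succ sv m
        rw [hsv0] at h4
        rw [hsm] at h5
        rw [add_zero] at h4 h5
        rw [← h4, h5]
      rw [h3]
      rw [Finset.sum_const, Finset.card_range]
      congr 1
      rw [← Nat.cast_smul_eq_nsmul ℝ]
    rw [hehdef, map_neg, map_smul, h1]
    rw [smul_sub, smul_smul, inv_mul_cancel₀ hmne, one_smul]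
    abel
  have hehb : ‖eh‖ ≤ (m:ℝ) * ((m:ℝ) * ‖x‖) := by
    rw [hehdef, norm_neg, norm_smul, Real.norm_eq_abs,
      abs_of_pos (inv_pos.2 (by exact_mod_cast hm0))]
    have h1 : ‖∑ i ∈ Finset.range m, sv i‖ ≤ (m:ℝ) * ((m:ℝ) * ‖x‖) := by
      calc ‖∑ i ∈ Finset.range m, sv i‖ ≤ ∑ i ∈ Finset.range m, ‖sv i‖ := norm_sum_le _ _
        _ ≤ ∑ i ∈ Finset.range m, (m:ℝ) * ‖x‖ :=
            Finset.sum_le_sum (fun i hi => hsb i (le_of_lt (Finset.mem_range.1 hi)))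
        _ = (m:ℝ) * ((m:ℝ) * ‖x‖) := by
            rw [Finset.sum_const, Finset.card_range, nsmul_eq_mul]
    have h2 : (0:ℝ) < (m:ℝ)⁻¹ := inv_pos.2 (by exact_mod_cast hm0)
    have h3 : (m:ℝ)⁻¹ ≤ 1 := inv_le_one_of_one_le₀ (by exact_mod_cast hm0)
    nlinarith [norm_nonneg (∑ i ∈ Finset.range m, sv i)]
  -- choose the depth
  obtain ⟨j0, hj0a⟩ := pow_unbounded_of_one_lt
    (((m:ℝ) * ((m:ℝ) * ‖x‖) + (‖yin‖ + ‖b‖)) * (4/rr)) hL1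
  have hsmall : (S.lam^j0)⁻¹ * ((m:ℝ) * ((m:ℝ) * ‖x‖) + (‖yin‖ + ‖b‖)) < rr/4 := by
    rw [inv_mul_lt_iff₀ (hposj j0)]
    calc (m:ℝ) * ((m:ℝ) * ‖x‖) + (‖yin‖ + ‖b‖)
        = ((m:ℝ) * ((m:ℝ) * ‖x‖) + (‖yin‖ + ‖b‖)) * (4/rr) * (rr/4) := by field_simp
      _ < S.lam ^ j0 * (rr/4) := mul_lt_mul_of_pos_right hj0a (by positivity)
  set e : Pt d := (S.lam^(n + j0*M))⁻¹ • eh with hedef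
  set xk : Pt d := (S.lam^(n + j0*M))⁻¹ • x with hxkdef
  have hgex : gE e = e + xk := by
    rw [hedef, map_smul, hgeh, hxkdef, smul_add]
  set cc : Pt d := (S.lam^(n + j0*M))⁻¹ • Y j0 with hccdef
  have hnecc : ‖e‖ + ‖cc‖ < rr := by
    have n1 : ‖e‖ ≤ (S.lam^j0)⁻¹ * ((m:ℝ) * ((m:ℝ) * ‖x‖)) := by
      rw [hedef, norm_smul, Real.norm_eq_abs, abs_of_pos (inv_pos.2 (hposj _))]
      have hb1 : (0:ℝ) ≤ ‖eh‖ := norm_nonneg eh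
      have hb2 := hinv1 j0
      have hb3 : (0:ℝ) < (S.lam ^ (n + j0*M))⁻¹ := inv_pos.2 (hposj _)
      nlinarith [hehb]
    have n2 : ‖cc‖ ≤ (S.lam^j0)⁻¹ * (‖yin‖ + ‖b‖) + ‖b‖ := hYbound j0
    have n3 : (S.lam^j0)⁻¹ * ((m:ℝ)*((m:ℝ)*‖x‖)) + (S.lam^j0)⁻¹ * (‖yin‖+‖b‖)
        = (S.lam^j0)⁻¹ * ((m:ℝ)*((m:ℝ)*‖x‖) + (‖yin‖+‖b‖)) := by ring
    have n4 : ‖b‖ ≤ rr/8 := hbnorm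
    linarith
  -- transport the symmetry to level j0
  have hsymk : σ.actSet g (TT j0) = translateSet (TT j0) xk := by
    apply hinj (n + j0*M) (Omega_actSet σ g (hTTΩ j0)) (Omega_trS (hTTΩ j0) xk)
    rw [subIter_actSet σ g (hTTPT j0), hsubTT j0, hsym]
    rw [subIter_trS, hsubTT j0, hxkdef, smul_inv_smul₀ (lam_pow_ne _)]
  have ht1 : p.translate cc ∈ TT j0 := htile j0
  have hgt : σ.act g (p.translate cc) ∈ translateSet (TT j0) xk := by
    rw [← hsymk]
    exact ⟨_, ht1, rfl⟩
  obtain ⟨s0, hs0TT, hs0e⟩ := hgt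
  have hs0form : s0 = (σ.act g p).translate (gE cc - xk) := by
    have h1 : s0.translate xk = (σ.act g p).translate (gE cc) := by
      show (fun t => t.translate xk) s0 = _
      rw [hs0e, σ.act_translate]
    have h2 := congrArg (fun u => u.translate (-xk)) h1
    simp only [tr_tr] at h2
    rw [show xk + -xk = (0:Pt d) by abel, tr_zero] at h2
    rw [h2]
    congr 1
  have hein1 : e ∈ interior (p.translate cc).carrier := by
    apply ball_subset_interior hr hp
    rw [mem_ball, dist_eq_norm]
    have := norm_sub_le e cc
    linarith
  have hein2 : e ∈ interior s0.carrier := by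
    rw [hs0form]
    apply ball_subset_interior hr (σ.act_proto g p hp)
    rw [mem_ball, dist_eq_norm]
    have h1 : e - (gE cc - xk) = gE (e - cc) := by
      rw [map_sub, hgex]
      abel
    rw [h1, gE.norm_map]
    have := norm_sub_le e cc
    linarith
  have hteq : s0 = p.translate cc := by
    by_contra hne3
    have hdis := (hTTΩ j0).1.1.2 s0 hs0TT (p.translate cc) ht1 hne3
    have hmem : e ∈ interior s0.carrier ∩ interior (p.translate cc).carrier :=
      ⟨hein2, hein1⟩
    rw [hdis] at hmem
    exact hmem
  have hpeq : σ.act g p = p ∧ gE cc - xk = cc := by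
    apply punc_unique (σ.act_proto g p hp) hp
    rw [← hs0form, hteq]
  have hg1 : g = 1 := hfree g p hp hpeq.1
  have hxk0 : xk = 0 := by
    have h1 : gE cc = cc := by
      rw [hgE, hg1]
      simp
    have h2 := hpeq.2
    rw [h1] at h2
    exact sub_eq_self.1 h2
  have hx0 : x = 0 := by
    have h1 : x = S.lam^(n + j0*M) • xk := by
      rw [hxkdef, smul_inv_smul₀ (lam_pow_ne _)]
    rw [h1, hxk0, smul_zero]
  exact ⟨hg1, hx0⟩





end TilingAux8
end
open TilingAux TilingAux2 TilingAux3 TilingAux4 TilingAux5 TilingAux6 TilingAux7 TilingAux8 in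
/-- For a finite symmetry group `G` acting freely on `𝒫`, the set of
`T' ∈ Ω_punc` with trivial isotropy in `R_punc ⋊ G` is dense in `Ω_punc` for the
tiling metric (`R_punc ⋊ G` is essentially principal). -/
theorem stmt1 {d : ℕ} (hd : 1 ≤ d) (S : SubstSystem d)
    (hA1 : S.Primitive) (hA2 : S.FLC) (hA3 : S.SubBijective)
    (G : Subgroup (Pt d ≃ₗᵢ[ℝ] Pt d)) [Finite G] (σ : SymmAction S G)
    (hfree : σ.FreeOnProto) :
    S.DenseInPunc {T' ∈ S.OmegaPunc |
      ∀ (x : Pt d) (g : G), translateSet T' x ∈ S.OmegaPunc →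
        σ.actSet g⁻¹ (translateSet T' x) = T' → g = 1 ∧ x = 0} := by
  intro T hTp ε hε
  have hε2 : (0:ℝ) < ε/2 := by linarith
  obtain ⟨T', hT'p, hagree, hiso⟩ :=
    main_construction σ hA1 hA3 hfree hTp (1/(ε/2))
  refine ⟨T', ⟨hT'p, ?_⟩, ?_⟩
  · intro x g _ heq
    have hsym : σ.actSet g T' = translateSet T' x := by
      have h1 := congrArg (σ.actSet g) heq
      rw [actSet_actSet, mul_inv_cancel, actSet_one] at h1
      exact h1.symm
    exact hiso x g hsym
  · -- the tiling distance is at most ε/2 < ε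
    have hmem : (ε/2) ∈ ({1} ∪ {ε' : ℝ | 0 < ε' ∧ ∃ x x' : Pt d, ‖x‖ < ε' ∧ ‖x'‖ < ε' ∧
        tilesAt (translateSet T (-x)) (Metric.ball (0 : Pt d) (1 / ε')) =
          tilesAt (translateSet T' (-x')) (Metric.ball (0 : Pt d) (1 / ε'))} : Set ℝ) := by
      refine Or.inr ⟨hε2, 0, 0, by simpa using hε2, by simpa using hε2, ?_⟩
      rw [neg_zero, trS_zero, trS_zero]
      exact hagree
    have hbdd : BddBelow ({1} ∪ {ε' : ℝ | 0 < ε' ∧ ∃ x x' : Pt d, ‖x‖ < ε' ∧ ‖x'‖ < ε' ∧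
        tilesAt (translateSet T (-x)) (Metric.ball (0 : Pt d) (1 / ε')) =
          tilesAt (translateSet T' (-x')) (Metric.ball (0 : Pt d) (1 / ε'))} : Set ℝ) := by
      refine ⟨0, ?_⟩
      rintro z (rfl | ⟨hz, _⟩)
      · norm_num
      · exact le_of_lt hz
    have hle : tilingDist T T' ≤ ε/2 := csInf_le hbdd hmem
    linarith
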